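/- arXiv:2003.14060 — 5 statements merged into one kernel-verified Lean document; each statement's English description precedes it below -/
import Mathlib

section
/- Let C : [0,∞) ⇝ ℝⁿ satisfy Hypothesis (H_C) and let L > 0. Then for all s, t ≥ 0, all x ∈ C(s), x' ∈ C(t), and every ξ ∈ N_{C(s)}(x) with ‖ξ‖ ≤ L, one has ξ·(x' − x) ≤ (L/r)‖x' − x‖² + (L·L_C²/r)(s − t)² + L·L_C·|s − t|. -/
open scoped Pointwise RealInnerProductSpace ENNReal
open Set Metric MeasureTheory

variable {E : Type*} [NormedAddCommGroup E] [InnerProductSpace ℝ E]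

/-- Proximal normal cone to `K` at `x` (empty when `x ∉ K`):
`v ∈ N_K(x)` iff `x ∈ K` and there is `σ ≥ 0` with `⟪v, y - x⟫ ≤ σ‖y - x‖²` for all `y ∈ K`. -/
def proxNormalCone (K : Set E) (x : E) : Set E :=
  {v | x ∈ K ∧ ∃ σ : ℝ, 0 ≤ σ ∧ ∀ y ∈ K, ⟪v, y - x⟫ ≤ σ * ‖y - x‖ ^ 2}

/-- `r`-prox-regularity of a closed set. -/
def ProxRegular (r : ℝ) (C : Set E) : Prop :=
  ∀ x ∈ C, ∀ y ∈ C, ∀ ζ ∈ proxNormalCone C x,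
    ⟪ζ, y - x⟫ ≤ 1 / (2 * r) * ‖ζ‖ * ‖y - x‖ ^ 2

/-- Hypothesis (H_C): values are nonempty, compact, `r`-prox-regular; `L_C`-Lipschitz
for the Hausdorff distance. -/
structure HypC (r L_C : ℝ) (C : ℝ → Set E) : Prop where
  nonempty : ∀ t, 0 ≤ t → (C t).Nonempty
  isCompact : ∀ t, 0 ≤ t → IsCompact (C t)
  proxRegular : ∀ t, 0 ≤ t → ProxRegular r (C t)
  lipschitz : ∀ s t, 0 ≤ s → 0 ≤ t → hausdorffDist (C s) (C t) ≤ L_C * |s - t|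

/-- Hypothesis (H_G): nonempty, closed, convex values, bounded by `M`, `L_G`-Lipschitz
for the Hausdorff distance. -/
structure HypG (M L_G : ℝ) (G : ℝ → E → Set E) : Prop where
  nonempty : ∀ t x, (G t x).Nonempty
  isClosed : ∀ t x, IsClosed (G t x)
  convex : ∀ t x, Convex ℝ (G t x)
  bounded : ∀ t x, ∀ v ∈ G t x, ‖v‖ ≤ M
  lipschitz : ∀ s t (x y : E), hausdorffDist (G s x) (G t y) ≤ L_G * (|s - t| + ‖x - y‖)

/-- Solution of the perturbed sweeping process `ẋ(t) ∈ -N_{C(t)}(x(t)) + G(t, x(t))`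
on `[t0, T]`: an (absolutely continuous) integral of an integrable derivative `x'`
satisfying the differential inclusion a.e., with `x(t) ∈ C(t)` for all `t ∈ [t0, T]`. -/
def IsSweepingSol (C : ℝ → Set E) (G : ℝ → E → Set E) (t0 T : ℝ) (x : ℝ → E) : Prop :=
  (∀ t ∈ Icc t0 T, x t ∈ C t) ∧
  ∃ x' : ℝ → E, IntegrableOn x' (Icc t0 T) ∧
    (∀ t ∈ Icc t0 T, x t = x t0 + ∫ s in t0..t, x' s) ∧
    ∀ᵐ t ∂(volume.restrict (Icc t0 T)),
      x' t ∈ -proxNormalCone (C t) (x t) + G t (x t)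

/-- Minimum time to reach the target `S` subject to the perturbed sweeping process,
starting at `x0 ∈ C t0` at time `t0` (`+∞` if `S` is never reached). -/
noncomputable def minTime (C : ℝ → Set E) (G : ℝ → E → Set E) (S : Set E)
    (t0 : ℝ) (x0 : E) : ℝ≥0∞ :=
  sInf (ENNReal.ofReal '' {a : ℝ | 0 ≤ a ∧ ∃ x : ℝ → E,
    IsSweepingSol C G t0 (t0 + a) x ∧ x t0 = x0 ∧ x (t0 + a) ∈ S})

/-- Proximal normal cone in the product space `ℝ × E` (with the Euclidean product
inner product `⟪(a,v),(b,w)⟫ = a*b + ⟪v,w⟫`). -/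
def proxNormalCone2 (K : Set (ℝ × E)) (q : ℝ × E) : Set (ℝ × E) :=
  {p | q ∈ K ∧ ∃ σ : ℝ, 0 ≤ σ ∧ ∀ q' ∈ K,
    p.1 * (q'.1 - q.1) + ⟪p.2, q'.2 - q.2⟫ ≤ σ * ((q'.1 - q.1) ^ 2 + ‖q'.2 - q.2‖ ^ 2)}

/-- Proximal normal cone in the product space `ℝ × E × ℝ`. -/
def proxNormalCone3 (K : Set (ℝ × E × ℝ)) (q : ℝ × E × ℝ) : Set (ℝ × E × ℝ) :=
  {p | q ∈ K ∧ ∃ σ : ℝ, 0 ≤ σ ∧ ∀ q' ∈ K,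
    p.1 * (q'.1 - q.1) + ⟪p.2.1, q'.2.1 - q.2.1⟫ + p.2.2 * (q'.2.2 - q.2.2) ≤
      σ * ((q'.1 - q.1) ^ 2 + ‖q'.2.1 - q.2.1‖ ^ 2 + (q'.2.2 - q.2.2) ^ 2)}

/-- Proximal normal cone in the product space `E × ℝ`. -/
def proxNormalConeER (K : Set (E × ℝ)) (q : E × ℝ) : Set (E × ℝ) :=
  {p | q ∈ K ∧ ∃ σ : ℝ, 0 ≤ σ ∧ ∀ q' ∈ K,
    ⟪p.1, q'.1 - q.1⟫ + p.2 * (q'.2 - q.2) ≤ σ * (‖q'.1 - q.1‖ ^ 2 + (q'.2 - q.2) ^ 2)}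

/-- The graph of the moving set `C`, i.e. `{(t,x) : t ≥ 0, x ∈ C(t)}`. -/
def graphSet (C : ℝ → Set E) : Set (ℝ × E) := {q | 0 ≤ q.1 ∧ q.2 ∈ C q.1}

/-- Under Hypothesis (H_C), for `s, t ≥ 0`, `x ∈ C(s)`, `x' ∈ C(t)` and
`ξ ∈ N_{C(s)}(x)` with `‖ξ‖ ≤ L`, one has
`ξ·(x' − x) ≤ (L/r)‖x' − x‖² + (L L_C²/r)(s − t)² + L L_C |s − t|`. -/
theorem normal_cone_time_estimate {n : ℕ} (r L_C L : ℝ) (hr : 0 < r) (hL : 0 < L)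
    (C : ℝ → Set (EuclideanSpace ℝ (Fin n))) (hC : HypC r L_C C)
    (s t : ℝ) (hs : 0 ≤ s) (ht : 0 ≤ t)
    (x x' : EuclideanSpace ℝ (Fin n)) (hx : x ∈ C s) (hx' : x' ∈ C t)
    (ξ : EuclideanSpace ℝ (Fin n)) (hξ : ξ ∈ proxNormalCone (C s) x) (hξL : ‖ξ‖ ≤ L) :
    ⟪ξ, x' - x⟫ ≤ L / r * ‖x' - x‖ ^ 2 + L * L_C ^ 2 / r * (s - t) ^ 2 + L * L_C * |s - t| := by
  obtain ⟨y, hy, hdy⟩ := (hC.isCompact s hs).exists_infDist_eq_dist (hC.nonempty s hs) x'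
  have hed : EMetric.hausdorffEdist (C t) (C s) ≠ ⊤ :=
    hausdorffEdist_ne_top_of_nonempty_of_bounded (hC.nonempty t ht) (hC.nonempty s hs)
      (hC.isCompact t ht).isBounded (hC.isCompact s hs).isBounded
  have h1 : infDist x' (C s) ≤ hausdorffDist (C t) (C s) :=
    infDist_le_hausdorffDist_of_mem hx' hed
  have hd : ‖x' - y‖ ≤ L_C * |s - t| := by
    rw [← dist_eq_norm, ← hdy]
    calc infDist x' (C s) ≤ hausdorffDist (C t) (C s) := h1
    _ ≤ L_C * |t - s| := hC.lipschitz t s ht hs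
    _ = L_C * |s - t| := by rw [abs_sub_comm]
  have hprox : ⟪ξ, y - x⟫ ≤ 1 / (2 * r) * ‖ξ‖ * ‖y - x‖ ^ 2 :=
    hC.proxRegular s hs x hx y hy ξ hξ
  have hcs : ⟪ξ, x' - y⟫ ≤ ‖ξ‖ * ‖x' - y‖ := real_inner_le_norm ξ (x' - y)
  have hsplit : ⟪ξ, x' - x⟫ = ⟪ξ, y - x⟫ + ⟪ξ, x' - y⟫ := by
    rw [← inner_add_right]; congr 1; abel
  have htri : ‖y - x‖ ≤ ‖x' - y‖ + ‖x' - x‖ := by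
    have := norm_sub_le_norm_sub_add_norm_sub y x' x
    rw [norm_sub_rev y x'] at this; linarith
  have h0 : (0:ℝ) ≤ ‖x' - y‖ := norm_nonneg _
  have h0' : (0:ℝ) ≤ ‖x' - x‖ := norm_nonneg _
  have h0'' : (0:ℝ) ≤ ‖y - x‖ := norm_nonneg _
  have h0ξ : (0:ℝ) ≤ ‖ξ‖ := norm_nonneg _
  have habs : (0:ℝ) ≤ |s - t| := abs_nonneg _
  have hLC : 0 ≤ L_C * |s - t| := le_trans h0 hd
  rw [hsplit]
  have key : 1 / (2 * r) * ‖ξ‖ * ‖y - x‖ ^ 2 + ‖ξ‖ * ‖x' - y‖ ≤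
      L / r * ‖x' - x‖ ^ 2 + L * L_C ^ 2 / r * (s - t) ^ 2 + L * L_C * |s - t| := by
    have hsq : (s - t) ^ 2 = |s - t| ^ 2 := (sq_abs _).symm
    rw [hsq]
    have h2 : ‖y - x‖ ^ 2 ≤ 2 * ‖x' - y‖ ^ 2 + 2 * ‖x' - x‖ ^ 2 := by
      nlinarith [sq_nonneg (‖x' - y‖ - ‖x' - x‖),
        mul_le_mul htri htri h0'' (by positivity : (0:ℝ) ≤ ‖x' - y‖ + ‖x' - x‖)]
    have h3 : ‖x' - y‖ ^ 2 ≤ (L_C * |s - t|) ^ 2 := by nlinarith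
    have hr' : (0:ℝ) ≤ 1 / (2 * r) := by positivity
    have e1 : ‖ξ‖ * ‖y - x‖ ^ 2 ≤ L * (2 * ‖x' - y‖ ^ 2 + 2 * ‖x' - x‖ ^ 2) :=
      mul_le_mul hξL h2 (sq_nonneg _) hL.le
    have e2 : ‖ξ‖ * ‖x' - y‖ ≤ L * (L_C * |s - t|) :=
      mul_le_mul hξL hd h0 hL.le
    have e3 : 1 / (2 * r) * (L * (2 * ‖x' - y‖ ^ 2 + 2 * ‖x' - x‖ ^ 2)) =
        L / r * ‖x' - y‖ ^ 2 + L / r * ‖x' - x‖ ^ 2 := by field_simp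
    have e4 : L / r * ‖x' - y‖ ^ 2 ≤ L / r * (L_C * |s - t|) ^ 2 :=
      mul_le_mul_of_nonneg_left h3 (by positivity)
    have e5 : L / r * (L_C * |s - t|) ^ 2 = L * L_C ^ 2 / r * |s - t| ^ 2 := by ring
    have e6 : 1 / (2 * r) * ‖ξ‖ * ‖y - x‖ ^ 2 ≤
        1 / (2 * r) * (L * (2 * ‖x' - y‖ ^ 2 + 2 * ‖x' - x‖ ^ 2)) := by
      rw [mul_assoc]; exact mul_le_mul_of_nonneg_left e1 hr'
    linarith
  linarith
end

section
/- Assume Hypothesis (H_C) and let v ∈ L¹_loc([t₀,∞), ℝⁿ). Then the sweeping process with single-valued perturbation has at most one solution: if x₁, x₂ : [t₀,T] → ℝⁿ are absolutely continuous, satisfy xᵢ(t) ∈ C(t) for all t ∈ [t₀,T], ẋᵢ(t) ∈ −N_{C(t)}(xᵢ(t)) + v(t) for a.e. t ∈ [t₀,T], and x₁(t₀) = x₂(t₀), then x₁(t) = x₂(t) for all t ∈ [t₀,T]. -/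
open scoped Pointwise RealInnerProductSpace ENNReal
open Set Metric MeasureTheory

variable {E : Type*} [NormedAddCommGroup E] [InnerProductSpace ℝ E]

section Aux

open Filter

private lemma gronwall_zero {φ k : ℝ → ℝ} (hφc : Continuous φ) (hφ0 : ∀ t, 0 ≤ φ t)
    (hk : Integrable k) (hk0 : ∀ t, 0 ≤ k t) {t0 T : ℝ} (hT : t0 ≤ T)
    (h : ∀ t ∈ Icc t0 T, φ t ≤ ∫ s in t0..t, k s * φ s) :
    ∀ t ∈ Icc t0 T, φ t = 0 := by
  -- primitive of φ
  set Φ : ℝ → ℝ := fun t => ∫ s in t0..t, φ s with hΦ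
  have hΦd : ∀ u : ℝ, HasDerivAt Φ (φ u) u := fun u =>
    intervalIntegral.integral_hasDerivAt_right (hφc.intervalIntegrable _ _)
      (hφc.stronglyMeasurableAtFilter _ _) hφc.continuousAt
  have hΦc : Continuous Φ :=
    intervalIntegral.continuous_primitive (fun a b => hφc.intervalIntegrable a b) t0
  have hΦmono : ∀ a b : ℝ, a ≤ b → Φ a ≤ Φ b := by
    intro a b hab
    have hadd : Φ a + ∫ s in a..b, φ s = Φ b :=
      intervalIntegral.integral_add_adjacent_intervals (hφc.intervalIntegrable _ _)
        (hφc.intervalIntegrable _ _)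
    have : 0 ≤ ∫ s in a..b, φ s :=
      intervalIntegral.integral_nonneg hab fun u _ => hφ0 u
    linarith
  have hΦ0 : ∀ t, t0 ≤ t → 0 ≤ Φ t := fun t ht =>
    intervalIntegral.integral_nonneg ht fun u _ => hφ0 u
  have hφt0 : φ t0 = 0 := by
    have := h t0 ⟨le_refl _, hT⟩
    simp only [intervalIntegral.integral_same] at this
    exact le_antisymm this (hφ0 t0)
  -- key: if Φ t ≤ 0 then φ vanishes on [t0, t]
  have hzero : ∀ t ∈ Icc t0 T, Φ t ≤ 0 → ∀ u ∈ Icc t0 t, φ u = 0 := by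
    intro t ht hΦt u hu
    have hΦeq : ∀ w ∈ Icc t0 t, Φ w = 0 := fun w hw =>
      le_antisymm (le_trans (hΦmono w t hw.2) hΦt) (hΦ0 w hw.1)
    have hIoo : ∀ u' ∈ Ioo t0 t, φ u' = 0 := by
      intro u' hu'
      have hev : Φ =ᶠ[nhds u'] fun _ => (0 : ℝ) := by
        filter_upwards [Ioo_mem_nhds hu'.1 hu'.2] with w hw
        exact hΦeq w ⟨hw.1.le, hw.2.le⟩
      have h1 : HasDerivAt (fun _ : ℝ => (0 : ℝ)) (φ u') u' := (hΦd u').congr_of_eventuallyEq hev.symm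
      have h2 : HasDerivAt (fun _ : ℝ => (0 : ℝ)) 0 u' := hasDerivAt_const u' 0
      exact (h1.unique h2)
    rcases eq_or_lt_of_le hu.1 with h1 | h1
    · rw [← h1]; exact hφt0
    rcases eq_or_lt_of_le hu.2 with h2 | h2
    · -- u = t : use closure
      have hclosed : IsClosed {x : ℝ | φ x = 0} := isClosed_eq hφc continuous_const
      have hsub : Ioo t0 t ⊆ {x : ℝ | φ x = 0} := fun w hw => hIoo w hw
      have : Icc t0 t ⊆ {x : ℝ | φ x = 0} := by
        rw [← closure_Ioo (lt_of_lt_of_le h1 hu.2).ne]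
        exact closure_minimal hsub hclosed
      exact this hu
    · exact hIoo u ⟨h1, h2⟩
  -- integrability of k * φ on subintervals of [t0, T]
  obtain ⟨Cb, hCb⟩ := isCompact_Icc.exists_bound_of_continuousOn (s := Icc t0 T) hφc.continuousOn
  have hkφint : IntegrableOn (fun s => k s * φ s) (Icc t0 T) := by
    have h2 : (fun s => k s * φ s) = fun s => φ s * k s := funext fun s => mul_comm _ _
    rw [h2]
    exact Integrable.bdd_mul (hk.integrableOn) (hφc.aestronglyMeasurable.restrict)
      ((ae_restrict_iff' measurableSet_Icc).mpr (Eventually.of_forall hCb))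
  have hkint : ∀ a b : ℝ, a ∈ Icc t0 T → b ∈ Icc t0 T →
      IntervalIntegrable (fun s => k s * φ s) volume a b := by
    intro a b ha hb
    rw [intervalIntegrable_iff]
    refine hkφint.mono_set fun s hs => ?_
    exact ⟨le_trans (le_min ha.1 hb.1) hs.1.le, le_trans hs.2 (max_le ha.2 hb.2)⟩
  -- primitive of k
  set Kp : ℝ → ℝ := fun y => ∫ s in t0..y, k s with hKp
  have hKpc : Continuous Kp :=
    intervalIntegral.continuous_primitive (fun a b => hk.intervalIntegrable) t0
  -- continuous induction
  set S : Set ℝ := {t : ℝ | Φ t ≤ 0} with hS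
  have hmain : Icc t0 T ⊆ S := by
    refine IsClosed.Icc_subset_of_forall_exists_gt
      ((isClosed_le hΦc continuous_const).inter isClosed_Icc) ?_ ?_
    · show Φ t0 ≤ 0
      simp only [hΦ, intervalIntegral.integral_same, le_refl]
    · rintro x ⟨hxs, hx0, hxT⟩ y hy
      have hφx0 : ∀ u ∈ Icc t0 x, φ u = 0 := hzero x ⟨hx0, hxT.le⟩ hxs
      obtain ⟨δ₁, hδ₁0, hδ₁⟩ := Metric.continuousAt_iff.mp hKpc.continuousAt (1/2) (by norm_num)
      set z := min y (min (x + δ₁ / 2) T) with hz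
      have hxz : x < z := lt_min hy (lt_min (by linarith) hxT)
      have hzT : z ≤ T := le_trans (min_le_right _ _) (min_le_right _ _)
      have hzδ : z - x < δ₁ := by
        have : z ≤ x + δ₁ / 2 := le_trans (min_le_right _ _) (min_le_left _ _)
        linarith
      have hxIcc : x ∈ Icc t0 T := ⟨hx0, hxT.le⟩
      have hzIcc : z ∈ Icc t0 T := ⟨le_trans hx0 hxz.le, hzT⟩
      -- max of φ on [x,z]
      obtain ⟨m, hm, hmax⟩ := isCompact_Icc.exists_isMaxOn (α := ℝ)
        ⟨x, left_mem_Icc.2 hxz.le⟩ (hφc.continuousOn (s := Icc x z))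
      have hmIcc : m ∈ Icc t0 T := ⟨le_trans hx0 hm.1, le_trans hm.2 hzT⟩
      -- bound on [x,z]
      have hbound : ∀ t' ∈ Icc x z, φ t' ≤ 1 / 2 * φ m := by
        intro t' ht'
        have ht'Icc : t' ∈ Icc t0 T := ⟨le_trans hx0 ht'.1, le_trans ht'.2 hzT⟩
        have hsplit : (∫ s in t0..x, k s * φ s) + ∫ s in x..t', k s * φ s
            = ∫ s in t0..t', k s * φ s :=
          intervalIntegral.integral_add_adjacent_intervals
            (hkint t0 x (left_mem_Icc.2 hT) hxIcc) (hkint x t' hxIcc ht'Icc)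
        have hfirst : (∫ s in t0..x, k s * φ s) = 0 := by
          rw [intervalIntegral.integral_congr (g := fun _ => (0 : ℝ))]
          · exact intervalIntegral.integral_zero
          · intro s hs
            rw [uIcc_of_le hx0] at hs
            simp [hφx0 s hs]
        have hsecond : (∫ s in x..t', k s * φ s) ≤ ∫ s in x..t', k s * φ m := by
          refine intervalIntegral.integral_mono_on ht'.1 (hkint x t' hxIcc ht'Icc)
            ((hk.mul_const (φ m)).intervalIntegrable) fun s hs => ?_
          exact mul_le_mul_of_nonneg_left
            (hmax ⟨hs.1, le_trans hs.2 ht'.2⟩) (hk0 s)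
        have hKdiff : (∫ s in x..t', k s) = Kp t' - Kp x :=
          (intervalIntegral.integral_interval_sub_left (hk.intervalIntegrable)
            (hk.intervalIntegrable)).symm
        have hthird : (∫ s in x..t', k s * φ m) = (Kp t' - Kp x) * φ m := by
          rw [intervalIntegral.integral_mul_const, hKdiff]
        have hKsmall : Kp t' - Kp x ≤ 1 / 2 := by
          have hd : dist t' x < δ₁ := by
            rw [Real.dist_eq, abs_of_nonneg (by linarith [ht'.1])]
            linarith [ht'.2]
          have := hδ₁ hd
          rw [Real.dist_eq] at this
          calc Kp t' - Kp x ≤ |Kp t' - Kp x| := le_abs_self _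
            _ ≤ 1 / 2 := this.le
        have hfourth : (Kp t' - Kp x) * φ m ≤ 1 / 2 * φ m :=
          mul_le_mul_of_nonneg_right hKsmall (hφ0 m)
        calc φ t' ≤ ∫ s in t0..t', k s * φ s := h t' ht'Icc
          _ = (∫ s in t0..x, k s * φ s) + ∫ s in x..t', k s * φ s := hsplit.symm
          _ = ∫ s in x..t', k s * φ s := by rw [hfirst, zero_add]
          _ ≤ ∫ s in x..t', k s * φ m := hsecond
          _ = (Kp t' - Kp x) * φ m := hthird
          _ ≤ 1 / 2 * φ m := hfourth
      have hm0 : φ m = 0 := by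
        have := hbound m hm
        have := hφ0 m
        linarith
      have hφz : ∀ u ∈ Icc x z, φ u = 0 := fun u hu =>
        le_antisymm (by have := hbound u hu; rw [hm0] at this; linarith) (hφ0 u)
      refine ⟨z, ?_, hxz, min_le_left _ _⟩
      show Φ z ≤ 0
      have hadd : Φ x + ∫ s in x..z, φ s = Φ z :=
        intervalIntegral.integral_add_adjacent_intervals (hφc.intervalIntegrable _ _)
          (hφc.intervalIntegrable _ _)
      have hzz : (∫ s in x..z, φ s) = 0 := by
        rw [intervalIntegral.integral_congr (g := fun _ => (0 : ℝ))]
        · exact intervalIntegral.integral_zero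
        · intro s hs
          rw [uIcc_of_le hxz.le] at hs
          exact hφz s hs
      have : Φ x ≤ 0 := hxs
      linarith
  intro t ht
  exact hzero t ht (hmain ht) t ⟨ht.1, le_refl _⟩

private lemma fubini_inner_primitive {E : Type*} [NormedAddCommGroup E] [InnerProductSpace ℝ E]
    [CompleteSpace E] {w : ℝ → E} (hwSM : StronglyMeasurable w) (hwInt : Integrable w volume)
    {t0 u : ℝ} (hu : t0 ≤ u) :
    ‖∫ a in t0..u, w a‖ ^ 2 = 2 * ∫ s in Ioc t0 u, ⟪(∫ a in t0..s, w a), w s⟫ := by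
  set F : ℝ → E := fun y => ∫ a in t0..y, w a with hFdef
  have hFc : Continuous F :=
    intervalIntegral.continuous_primitive (fun a b => hwInt.intervalIntegrable) t0
  have hFIoc : ∀ y, t0 ≤ y → F y = ∫ a in Ioc t0 y, w a := fun y hy =>
    intervalIntegral.integral_of_le hy
  set Q : ℝ × ℝ → ℝ := {p : ℝ × ℝ | p.1 ≤ p.2}.indicator (fun p => ⟪w p.1, w p.2⟫) with hQdef
  have hQsm : StronglyMeasurable Q :=
    ((hwSM.comp_measurable measurable_fst).inner
      (hwSM.comp_measurable measurable_snd)).indicator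
      (measurableSet_le measurable_fst measurable_snd)
  set μ := volume.restrict (Ioc t0 u) with hμdef
  have hQint : Integrable Q (μ.prod μ) := by
    refine Integrable.mono ((hwInt.restrict.norm).mul_prod (hwInt.restrict.norm))
      hQsm.aestronglyMeasurable (Eventually.of_forall fun p => ?_)
    by_cases hp : p.1 ≤ p.2
    · have : Q p = ⟪w p.1, w p.2⟫ :=
        indicator_of_mem (show p ∈ {q : ℝ × ℝ | q.1 ≤ q.2} from hp) _
      rw [this, Real.norm_eq_abs, Real.norm_eq_abs]
      exact (abs_real_inner_le_norm _ _).trans (le_abs_self _)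
    · have : Q p = 0 :=
        indicator_of_notMem (show p ∉ {q : ℝ × ℝ | q.1 ≤ q.2} from hp) _
      rw [this, Real.norm_eq_abs, Real.norm_eq_abs, abs_zero]
      exact abs_nonneg _
  -- inner integral in `a`, for fixed `s`
  have step1 : ∀ s ∈ Ioc t0 u, (∫ a in Ioc t0 u, Q (a, s)) = ⟪F s, w s⟫ := by
    intro s hs
    have h1 : (fun a => Q (a, s)) = (Iic s).indicator (fun a => ⟪w a, w s⟫) := by
      funext a
      simp only [hQdef, Set.indicator_apply, mem_setOf_eq, mem_Iic]
    rw [h1, setIntegral_indicator measurableSet_Iic, Ioc_inter_Iic, min_eq_right hs.2]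
    have hc : (∫ x in Ioc t0 s, ⟪w x, w s⟫) = ∫ x in Ioc t0 s, ⟪w s, w x⟫ :=
      integral_congr_ae (Eventually.of_forall fun a => real_inner_comm (w s) (w a))
    rw [hc, integral_inner hwInt.restrict (w s), real_inner_comm, hFIoc s hs.1.le]
  -- inner integral in `s`, for fixed `a`
  have step2 : ∀ a ∈ Ioc t0 u, (∫ s in Ioc t0 u, Q (a, s)) = ⟪w a, F u - F a⟫ := by
    intro a ha
    have h1 : (fun s => Q (a, s)) = (Ici a).indicator (fun s => ⟪w a, w s⟫) := by
      funext s
      simp only [hQdef, Set.indicator_apply, mem_setOf_eq, mem_Ici]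
    have h2 : Ioc t0 u ∩ Ici a = Icc a u := by
      ext s
      simp only [mem_inter_iff, mem_Ioc, mem_Ici, mem_Icc]
      constructor
      · rintro ⟨⟨_, h2⟩, h3⟩; exact ⟨h3, h2⟩
      · rintro ⟨h1, h2⟩; exact ⟨⟨lt_of_lt_of_le ha.1 h1, h2⟩, h1⟩
    rw [h1, setIntegral_indicator measurableSet_Ici, h2, integral_Icc_eq_integral_Ioc]
    rw [integral_inner hwInt.restrict (w a)]
    congr 1
    have hadd : F a + ∫ s in a..u, w s = F u :=
      intervalIntegral.integral_add_adjacent_intervals (hwInt.intervalIntegrable)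
        (hwInt.intervalIntegrable)
    have : (∫ s in a..u, w s) = ∫ s in Ioc a u, w s := intervalIntegral.integral_of_le ha.2
    rw [← this]
    rw [eq_sub_iff_add_eq, add_comm]
    exact hadd
  have hswap : (∫ a in Ioc t0 u, ∫ s in Ioc t0 u, Q (a, s))
      = ∫ s in Ioc t0 u, ∫ a in Ioc t0 u, Q (a, s) :=
    integral_integral_swap hQint
  have hRHS : (∫ s in Ioc t0 u, ∫ a in Ioc t0 u, Q (a, s)) = ∫ s in Ioc t0 u, ⟪F s, w s⟫ :=
    setIntegral_congr_fun measurableSet_Ioc fun s hs => step1 s hs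
  have hLHS : (∫ a in Ioc t0 u, ∫ s in Ioc t0 u, Q (a, s))
      = ∫ a in Ioc t0 u, ⟪w a, F u - F a⟫ :=
    setIntegral_congr_fun measurableSet_Ioc fun a ha => step2 a ha
  -- integrability of the two pieces
  obtain ⟨Cf, hCf⟩ := (isCompact_Icc (a := t0) (b := u)).exists_bound_of_continuousOn
    hFc.continuousOn
  have hint2 : Integrable (fun a => ⟪w a, F a⟫) μ := by
    refine Integrable.mono' ((hwInt.norm.const_mul Cf).restrict)
      ((hwSM.aestronglyMeasurable.inner hFc.aestronglyMeasurable).restrict) ?_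
    filter_upwards [ae_restrict_mem measurableSet_Ioc] with a ha
    rw [Real.norm_eq_abs]
    calc |⟪w a, F a⟫| ≤ ‖w a‖ * ‖F a‖ := abs_real_inner_le_norm _ _
      _ ≤ ‖w a‖ * Cf := by
          refine mul_le_mul_of_nonneg_left ?_ (norm_nonneg _)
          exact hCf a ⟨ha.1.le, ha.2⟩
      _ = Cf * ‖w a‖ := mul_comm _ _
  have hint1 : Integrable (fun a => ⟪w a, F u⟫) μ := hwInt.restrict.inner_const (F u)
  have hsplit : (∫ a in Ioc t0 u, ⟪w a, F u - F a⟫)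
      = (∫ a in Ioc t0 u, ⟪w a, F u⟫) - ∫ a in Ioc t0 u, ⟪w a, F a⟫ := by
    rw [← integral_sub hint1 hint2]
    exact integral_congr_ae (Eventually.of_forall fun a => inner_sub_right _ _ _)
  have h1 : (∫ a in Ioc t0 u, ⟪w a, F u⟫) = ⟪F u, F u⟫ := by
    have hc : (∫ a in Ioc t0 u, ⟪w a, F u⟫) = ∫ a in Ioc t0 u, ⟪F u, w a⟫ :=
      integral_congr_ae (Eventually.of_forall fun a => real_inner_comm (F u) (w a))
    rw [hc, integral_inner hwInt.restrict (F u), ← hFIoc u hu]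
  have h2 : (∫ a in Ioc t0 u, ⟪w a, F a⟫) = ∫ s in Ioc t0 u, ⟪F s, w s⟫ :=
    integral_congr_ae (Eventually.of_forall fun a => real_inner_comm (F a) (w a))
  have hnorm : ⟪F u, F u⟫ = ‖F u‖ ^ 2 := real_inner_self_eq_norm_sq _
  have key := hswap
  rw [hRHS, hLHS, hsplit, h1, h2] at key
  rw [← hnorm]
  show ⟪F u, F u⟫ = 2 * ∫ s in Ioc t0 u, ⟪F s, w s⟫
  linarith [key]

end Aux

/-- Under Hypothesis (H_C), the sweeping process with a locally integrable
single-valued perturbation `v` has at most one solution from a given initial condition. -/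
theorem sweeping_process_uniqueness {n : ℕ} (r L_C : ℝ) (hr : 0 < r)
    (C : ℝ → Set (EuclideanSpace ℝ (Fin n))) (hC : HypC r L_C C)
    (t0 T : ℝ) (ht0 : 0 ≤ t0)
    (v : ℝ → EuclideanSpace ℝ (Fin n)) (hv : LocallyIntegrableOn v (Ici t0))
    (x₁ x₂ : ℝ → EuclideanSpace ℝ (Fin n))
    (hmem₁ : ∀ t ∈ Icc t0 T, x₁ t ∈ C t)
    (hmem₂ : ∀ t ∈ Icc t0 T, x₂ t ∈ C t)
    (hsol₁ : ∃ x' : ℝ → EuclideanSpace ℝ (Fin n), IntegrableOn x' (Icc t0 T) ∧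
      (∀ t ∈ Icc t0 T, x₁ t = x₁ t0 + ∫ s in t0..t, x' s) ∧
      ∀ᵐ t ∂(volume.restrict (Icc t0 T)),
        x' t ∈ -proxNormalCone (C t) (x₁ t) + {v t})
    (hsol₂ : ∃ x' : ℝ → EuclideanSpace ℝ (Fin n), IntegrableOn x' (Icc t0 T) ∧
      (∀ t ∈ Icc t0 T, x₂ t = x₂ t0 + ∫ s in t0..t, x' s) ∧
      ∀ᵐ t ∂(volume.restrict (Icc t0 T)),
        x' t ∈ -proxNormalCone (C t) (x₂ t) + {v t})
    (hinit : x₁ t0 = x₂ t0) :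
    ∀ t ∈ Icc t0 T, x₁ t = x₂ t := by
  obtain ⟨f₁, hf₁int, hf₁eq, hf₁ae⟩ := hsol₁
  obtain ⟨f₂, hf₂int, hf₂eq, hf₂ae⟩ := hsol₂
  intro t ht
  have hT : t0 ≤ T := ht.1.trans ht.2
  set J : Set ℝ := Icc t0 T with hJ
  set g : ℝ → EuclideanSpace ℝ (Fin n) := J.indicator (fun s => f₁ s - f₂ s) with hg
  have hgInt : Integrable g volume := by
    rw [hg, integrable_indicator_iff measurableSet_Icc]
    exact hf₁int.sub hf₂int
  set w : ℝ → EuclideanSpace ℝ (Fin n) := hgInt.1.mk g with hwdef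
  have hgw : g =ᵐ[volume] w := hgInt.1.ae_eq_mk
  have hwSM : StronglyMeasurable w := hgInt.1.stronglyMeasurable_mk
  have hwInt : Integrable w volume := hgInt.congr hgw
  set F : ℝ → EuclideanSpace ℝ (Fin n) := fun y => ∫ a in t0..y, w a with hFdef
  have hFc : Continuous F :=
    intervalIntegral.continuous_primitive (fun a b => hwInt.intervalIntegrable) t0
  have hsubI : ∀ a b : ℝ, a ∈ J → b ∈ J → Set.uIoc a b ⊆ J := by
    intro a b ha hb s hs
    exact ⟨le_trans (le_min ha.1 hb.1) hs.1.le, le_trans hs.2 (max_le ha.2 hb.2)⟩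
  have hf₁ii : ∀ u ∈ J, IntervalIntegrable f₁ volume t0 u := by
    intro u hu
    rw [intervalIntegrable_iff]
    exact hf₁int.mono_set (hsubI t0 u (left_mem_Icc.2 hT) hu)
  have hf₂ii : ∀ u ∈ J, IntervalIntegrable f₂ volume t0 u := by
    intro u hu
    rw [intervalIntegrable_iff]
    exact hf₂int.mono_set (hsubI t0 u (left_mem_Icc.2 hT) hu)
  have hFx : ∀ u ∈ J, x₁ u - x₂ u = F u := by
    intro u hu
    have e1 : x₁ u - x₂ u = ∫ s in t0..u, (f₁ s - f₂ s) := by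
      rw [hf₁eq u hu, hf₂eq u hu, hinit,
        intervalIntegral.integral_sub (hf₁ii u hu) (hf₂ii u hu)]
      abel
    have e2 : (∫ s in t0..u, (f₁ s - f₂ s)) = ∫ s in t0..u, g s := by
      refine intervalIntegral.integral_congr fun s hs => ?_
      rw [uIcc_of_le hu.1] at hs
      have hsJ : s ∈ J := ⟨hs.1, hs.2.trans hu.2⟩
      rw [hg, indicator_of_mem hsJ]
    have e3 : (∫ s in t0..u, g s) = F u := by
      refine intervalIntegral.integral_congr_ae ?_
      filter_upwards [hgw] with s hs _
      exact hs
    rw [e1, e2, e3]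
  set φ : ℝ → ℝ := fun y => ‖F y‖ ^ 2 with hφdef
  have hφc : Continuous φ := (hFc.norm).pow 2
  have hφ0 : ∀ y, 0 ≤ φ y := fun y => pow_nonneg (norm_nonneg _) 2
  have hvInt : IntegrableOn v J volume :=
    hv.integrableOn_compact_subset Icc_subset_Ici_self isCompact_Icc
  set k : ℝ → ℝ := J.indicator (fun s => 1 / r * (‖v s - f₁ s‖ + ‖v s - f₂ s‖)) with hkdef
  have hkInt : Integrable k volume := by
    rw [hkdef, integrable_indicator_iff measurableSet_Icc]
    exact ((hvInt.sub hf₁int).norm.add (hvInt.sub hf₂int).norm).const_mul _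
  have hk0 : ∀ s, 0 ≤ k s := fun s => indicator_nonneg (fun y _ => by positivity) s
  -- the pointwise a.e. differential inequality, from prox-regularity
  have hae : ∀ᵐ s : ℝ, s ∈ J → 2 * ⟪F s, w s⟫ ≤ k s * φ s := by
    filter_upwards [ae_imp_of_ae_restrict hf₁ae, ae_imp_of_ae_restrict hf₂ae, hgw]
      with s h1 h2 hws hs
    have hm1 := h1 hs
    have hm2 := h2 hs
    rw [Set.mem_add] at hm1 hm2
    obtain ⟨a₁, ha₁, b₁, hb₁, hab₁⟩ := hm1
    obtain ⟨a₂, ha₂, b₂, hb₂, hab₂⟩ := hm2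
    rw [Set.mem_singleton_iff] at hb₁ hb₂
    subst hb₁
    subst hb₂
    rw [Set.mem_neg] at ha₁ ha₂
    have hz₁ : v s - f₁ s ∈ proxNormalCone (C s) (x₁ s) := by
      have e : v s - f₁ s = -a₁ := by rw [← hab₁]; abel
      rw [e]; exact ha₁
    have hz₂ : v s - f₂ s ∈ proxNormalCone (C s) (x₂ s) := by
      have e : v s - f₂ s = -a₂ := by rw [← hab₂]; abel
      rw [e]; exact ha₂
    have hp₁ := hC.proxRegular s (ht0.trans hs.1) (x₁ s) (hmem₁ s hs) (x₂ s) (hmem₂ s hs) _ hz₁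
    have hp₂ := hC.proxRegular s (ht0.trans hs.1) (x₂ s) (hmem₂ s hs) (x₁ s) (hmem₁ s hs) _ hz₂
    have hFs : F s = x₁ s - x₂ s := (hFx s hs).symm
    have hwseq : w s = f₁ s - f₂ s := by
      rw [← hws, hg]
      exact indicator_of_mem hs _
    have hks : k s = 1 / r * (‖v s - f₁ s‖ + ‖v s - f₂ s‖) := indicator_of_mem hs _
    have e1 : ⟪F s, w s⟫ = ⟪v s - f₂ s, x₁ s - x₂ s⟫ - ⟪v s - f₁ s, x₁ s - x₂ s⟫ := by
      rw [hFs, hwseq, real_inner_comm]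
      have e : f₁ s - f₂ s = (v s - f₂ s) - (v s - f₁ s) := by abel
      rw [e, inner_sub_left]
    have e2 : ⟪v s - f₁ s, x₂ s - x₁ s⟫ = -⟪v s - f₁ s, x₁ s - x₂ s⟫ := by
      have e : x₂ s - x₁ s = -(x₁ s - x₂ s) := by abel
      rw [e, inner_neg_right]
    have e3 : ‖x₂ s - x₁ s‖ = ‖x₁ s - x₂ s‖ := norm_sub_rev _ _
    rw [e2, e3] at hp₁
    have hφs : φ s = ‖x₁ s - x₂ s‖ ^ 2 := by
      simp only [hφdef]
      rw [hFs]
    rw [hks, hφs, e1]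
    have hrr : (1 : ℝ) / r * (‖v s - f₁ s‖ + ‖v s - f₂ s‖) * ‖x₁ s - x₂ s‖ ^ 2
        = 2 * (1 / (2 * r) * ‖v s - f₁ s‖ * ‖x₁ s - x₂ s‖ ^ 2)
          + 2 * (1 / (2 * r) * ‖v s - f₂ s‖ * ‖x₁ s - x₂ s‖ ^ 2) := by
      field_simp
    rw [hrr]
    linarith [hp₁, hp₂]
  -- bounds used for integrability
  obtain ⟨Cf, hCf⟩ := (isCompact_Icc (a := t0) (b := T)).exists_bound_of_continuousOn
    hFc.continuousOn
  obtain ⟨Cφ, hCφ⟩ := (isCompact_Icc (a := t0) (b := T)).exists_bound_of_continuousOn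
    hφc.continuousOn
  have hkφint : IntegrableOn (fun s => k s * φ s) J := by
    have h2 : (fun s => k s * φ s) = fun s => φ s * k s := funext fun s => mul_comm _ _
    rw [h2]
    exact Integrable.bdd_mul (hkInt.integrableOn) (hφc.aestronglyMeasurable.restrict)
      ((ae_restrict_iff' measurableSet_Icc).mpr (Filter.Eventually.of_forall hCφ))
  -- the integral inequality
  have hineq : ∀ u ∈ J, φ u ≤ ∫ s in t0..u, k s * φ s := by
    intro u hu
    have hA : φ u = 2 * ∫ s in Ioc t0 u, ⟪F s, w s⟫ :=
      fubini_inner_primitive hwSM hwInt hu.1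
    have hFw_int : Integrable (fun s => ⟪F s, w s⟫) (volume.restrict (Ioc t0 u)) := by
      refine Integrable.mono' ((hwInt.norm.const_mul Cf).restrict)
        ((hFc.aestronglyMeasurable.inner hwSM.aestronglyMeasurable).restrict) ?_
      filter_upwards [ae_restrict_mem measurableSet_Ioc] with s hs
      rw [Real.norm_eq_abs]
      calc |⟪F s, w s⟫| ≤ ‖F s‖ * ‖w s‖ := abs_real_inner_le_norm _ _
        _ ≤ Cf * ‖w s‖ := by
            refine mul_le_mul_of_nonneg_right ?_ (norm_nonneg _)
            exact hCf s ⟨hs.1.le, hs.2.trans hu.2⟩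
    have hkφ_int : Integrable (fun s => k s * φ s) (volume.restrict (Ioc t0 u)) :=
      hkφint.mono_set fun s hs => ⟨hs.1.le, hs.2.trans hu.2⟩
    have hmono : (∫ s in Ioc t0 u, 2 * ⟪F s, w s⟫) ≤ ∫ s in Ioc t0 u, k s * φ s := by
      refine integral_mono_ae (hFw_int.const_mul 2) hkφ_int ?_
      filter_upwards [ae_restrict_mem measurableSet_Ioc, ae_restrict_of_ae hae]
        with s hs1 hs2
      exact hs2 ⟨hs1.1.le, hs1.2.trans hu.2⟩
    have h2I : (2 : ℝ) * (∫ s in Ioc t0 u, ⟪F s, w s⟫) = ∫ s in Ioc t0 u, 2 * ⟪F s, w s⟫ :=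
      (integral_const_mul 2 _).symm
    have hIoc : (∫ s in Ioc t0 u, k s * φ s) = ∫ s in t0..u, k s * φ s :=
      (intervalIntegral.integral_of_le hu.1).symm
    rw [hA, h2I, ← hIoc]
    exact hmono
  -- Gronwall
  have hzero := gronwall_zero hφc hφ0 hkInt hk0 hT hineq t ht
  have hFt : ‖F t‖ = 0 := by
    have h2 : ‖F t‖ ^ 2 = 0 := hzero
    nlinarith [norm_nonneg (F t)]
  have hF0 : F t = 0 := norm_eq_zero.mp hFt
  have := hFx t ht
  rw [hF0] at this
  exact sub_eq_zero.mp this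
end

section
/- Assume Hypotheses (H_C) and (H_G), let S ⊆ ℝⁿ be closed, and suppose the minimum time function T is upper semicontinuous on graph(C) and not identically +∞. Then the hypograph of T is strongly invariant for the augmented dynamics Γ(τ,x,λ) = {1} × (−N_{C(τ)}(x) + G(τ,x)) × {−1}; precisely: for every (t₀,x₀) ∈ graph(C), every real λ₀ ≤ T(t₀,x₀), every τ > 0 and every solution x of the perturbed sweeping process on [t₀, t₀ + τ] with x(t₀) = x₀, one has T(t₀ + s, x(t₀ + s)) ≥ λ₀ − s for all s ∈ [0, τ]. -/
open scoped Pointwise RealInnerProductSpace ENNReal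
open Set Metric MeasureTheory

variable {E : Type*} [NormedAddCommGroup E] [InnerProductSpace ℝ E]

/-- Restriction of a sweeping solution to a smaller time interval. -/
lemma IsSweepingSol.mono_right {C : ℝ → Set E} {G : ℝ → E → Set E} {a b b' : ℝ}
    {x : ℝ → E} (h : IsSweepingSol C G a b x) (hb' : b' ≤ b) :
    IsSweepingSol C G a b' x := by
  obtain ⟨hmem, x', hint, heq, hae⟩ := h
  exact ⟨fun t ht => hmem t ⟨ht.1, ht.2.trans hb'⟩, x',
    hint.mono_set (Icc_subset_Icc_right hb'),
    fun t ht => heq t ⟨ht.1, ht.2.trans hb'⟩,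
    ae_mono (Measure.restrict_mono (Icc_subset_Icc_right hb') le_rfl) hae⟩

/-- Concatenation of two sweeping solutions. -/
lemma IsSweepingSol.concat {C : ℝ → Set E} {G : ℝ → E → Set E} {a b c : ℝ}
    (hab : a ≤ b) (hbc : b ≤ c) {x y : ℝ → E}
    (hx : IsSweepingSol C G a b x) (hy : IsSweepingSol C G b c y) (hxy : x b = y b) :
    IsSweepingSol C G a c (fun t => if t ≤ b then x t else y t) := by
  obtain ⟨hxmem, x', hxint, hxeq, hxae⟩ := hx
  obtain ⟨hymem, y', hyint, hyeq, hyae⟩ := hy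
  set z : ℝ → E := fun t => if t ≤ b then x t else y t with hz
  set z' : ℝ → E := fun t => if t ≤ b then x' t else y' t with hz'
  have hza : z a = x a := if_pos hab
  -- integrability
  have hint1 : IntegrableOn z' (Icc a b) := by
    apply hxint.congr_fun (fun t ht => ?_) measurableSet_Icc
    exact (if_pos ht.2).symm
  have hne : ∀ᵐ t ∂(volume.restrict (Icc b c)), t ≠ b := by
    rw [ae_iff]
    have h1 : {t : ℝ | ¬t ≠ b} = {b} := by ext t; simp
    rw [h1, Measure.restrict_apply (measurableSet_singleton b)]
    exact measure_mono_null inter_subset_left (measure_singleton b)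
  have hint2 : IntegrableOn z' (Icc b c) := by
    apply hyint.congr
    filter_upwards [hne, ae_restrict_mem measurableSet_Icc] with t h1 h2
    have hnb : ¬ t ≤ b := fun hle => h1 (le_antisymm hle h2.1)
    exact (if_neg hnb).symm
  have hintz : IntegrableOn z' (Icc a c) :=
    (hint1.union hint2).mono_set (Icc_subset_Icc_union_Icc)
  -- interval integrability
  have hii1 : IntervalIntegrable z' volume a b :=
    (hint1.mono_set (by rw [uIcc_of_le hab])).intervalIntegrable
  have hii2 : ∀ t ∈ Icc b c, IntervalIntegrable z' volume b t := fun t ht =>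
    ((hint2.mono_set (Icc_subset_Icc_right ht.2)).mono_set
      (by rw [uIcc_of_le ht.1])).intervalIntegrable
  refine ⟨?_, z', hintz, ?_, ?_⟩
  · intro t ht
    by_cases h : t ≤ b
    · simpa [z, h] using hxmem t ⟨ht.1, h⟩
    · simpa [z, h] using hymem t ⟨(not_le.1 h).le, ht.2⟩
  · intro t ht
    by_cases h : t ≤ b
    · have : (∫ s in a..t, z' s) = ∫ s in a..t, x' s := by
        apply intervalIntegral.integral_congr
        intro s hs
        rw [uIcc_of_le ht.1] at hs
        exact if_pos (hs.2.trans h)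
      simp only [z, this]
      rw [if_pos h, if_pos hab]
      exact hxeq t ⟨ht.1, h⟩
    · have hbt : b ≤ t := (not_le.1 h).le
      have h1 : (∫ s in a..b, z' s) = x b - x a := by
        have : (∫ s in a..b, z' s) = ∫ s in a..b, x' s := by
          apply intervalIntegral.integral_congr
          intro s hs
          rw [uIcc_of_le hab] at hs
          exact if_pos hs.2
        rw [this]
        have := hxeq b ⟨hab, le_rfl⟩
        rw [this]; abel
      have h2 : (∫ s in b..t, z' s) = y t - y b := by
        have : (∫ s in b..t, z' s) = ∫ s in b..t, y' s := by
          apply intervalIntegral.integral_congr_ae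
          filter_upwards with s hs
          rw [uIoc_of_le hbt] at hs
          exact if_neg (not_le.2 hs.1)
        rw [this, hyeq t ⟨hbt, ht.2⟩]
        abel
      have hsplit : (∫ s in a..t, z' s) = (∫ s in a..b, z' s) + ∫ s in b..t, z' s :=
        (intervalIntegral.integral_add_adjacent_intervals hii1 (hii2 t ⟨hbt, ht.2⟩)).symm
      simp only [z]
      rw [if_neg h, if_pos hab, hsplit, h1, h2, hxy]
      abel
  · have hx' : ∀ᵐ t ∂volume, t ∈ Icc a b →
        x' t ∈ -proxNormalCone (C t) (x t) + G t (x t) :=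
      (ae_restrict_iff' measurableSet_Icc).1 hxae
    have hy' : ∀ᵐ t ∂volume, t ∈ Icc b c →
        y' t ∈ -proxNormalCone (C t) (y t) + G t (y t) :=
      (ae_restrict_iff' measurableSet_Icc).1 hyae
    rw [ae_restrict_iff' measurableSet_Icc]
    filter_upwards [hx', hy'] with t h1 h2 ht
    by_cases h : t ≤ b
    · simpa [z, z', h] using h1 ⟨ht.1, h⟩
    · simpa [z, z', h] using h2 ⟨(not_le.1 h).le, ht.2⟩

/-- if the minimum time function `T` is upper semicontinuous on the graph of `C`
and not identically `+∞`, then its hypograph is strongly invariant for the augmented dynamics: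
for every `(t₀,x₀)` on the graph, every `λ₀ ≤ T(t₀,x₀)`, every `τ > 0` and every solution `x`
on `[t₀, t₀+τ]` from `x₀`, one has `T(t₀+s, x(t₀+s)) ≥ λ₀ − s` on `[0,τ]`. -/
theorem hypograph_strong_invariance {n : ℕ} (r L_C M L_G : ℝ) (hr : 0 < r)
    (C : ℝ → Set (EuclideanSpace ℝ (Fin n)))
    (G : ℝ → EuclideanSpace ℝ (Fin n) → Set (EuclideanSpace ℝ (Fin n)))
    (hC : HypC r L_C C) (hG : HypG M L_G G)
    (S : Set (EuclideanSpace ℝ (Fin n))) (hS : IsClosed S)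
    (husc : UpperSemicontinuousOn
      (fun q : ℝ × EuclideanSpace ℝ (Fin n) => minTime C G S q.1 q.2) (graphSet C))
    (hnotinfty : ∃ t x, 0 ≤ t ∧ x ∈ C t ∧ minTime C G S t x ≠ ⊤) :
    ∀ t₀ x₀, 0 ≤ t₀ → x₀ ∈ C t₀ →
      ∀ l₀ : ℝ, ENNReal.ofReal l₀ ≤ minTime C G S t₀ x₀ →
        ∀ τ > (0 : ℝ), ∀ x : ℝ → EuclideanSpace ℝ (Fin n),
          IsSweepingSol C G t₀ (t₀ + τ) x → x t₀ = x₀ →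
          ∀ s ∈ Icc (0 : ℝ) τ,
            ENNReal.ofReal (l₀ - s) ≤ minTime C G S (t₀ + s) (x (t₀ + s)) := by
  intro t₀ x₀ ht₀ hx₀ l₀ hl₀ τ hτ x hxsol hxinit s hs
  rcases le_or_gt (l₀ - s) 0 with hls | hls
  · simp [ENNReal.ofReal_eq_zero.2 hls]
  apply le_sInf
  rintro m ⟨a, ⟨ha0, y, hy, hyinit, hyS⟩, rfl⟩
  -- build concatenated solution on [t₀, t₀ + (s + a)]
  have hsab : t₀ ≤ t₀ + s := by linarith [hs.1]
  have hsbc : t₀ + s ≤ t₀ + s + a := by linarith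
  have hxres : IsSweepingSol C G t₀ (t₀ + s) x :=
    hxsol.mono_right (by linarith [hs.2])
  have hz := hxres.concat hsab hsbc hy hyinit.symm
  set z : ℝ → EuclideanSpace ℝ (Fin n) :=
    fun t => if t ≤ t₀ + s then x t else y t with hzdef
  have hkey : minTime C G S t₀ x₀ ≤ ENNReal.ofReal (s + a) := by
    apply sInf_le
    refine ⟨s + a, ⟨by linarith [hs.1], z, ?_, ?_, ?_⟩, rfl⟩
    · have : t₀ + (s + a) = t₀ + s + a := by ring
      rw [this]; exact hz
    · simp only [hzdef, if_pos hsab, hxinit]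
    · have harith : t₀ + (s + a) = t₀ + s + a := by ring
      by_cases h : t₀ + (s + a) ≤ t₀ + s
      · have ha0' : a = 0 := le_antisymm (by linarith) ha0
        simp only [hzdef, if_pos h]
        rw [ha0', add_zero] at hyS
        rw [ha0', add_zero, ← hyinit]
        exact hyS
      · simp only [hzdef, if_neg h]
        rw [harith]
        exact hyS
  have h1 : ENNReal.ofReal l₀ ≤ ENNReal.ofReal (s + a) := le_trans hl₀ hkey
  have h2 : l₀ ≤ s + a := by
    rwa [ENNReal.ofReal_le_ofReal_iff (by linarith [hs.1])] at h1
  exact ENNReal.ofReal_le_ofReal (by linarith)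
end

section
/- Assume Hypotheses (H_C) and (H_G), let S ⊆ ℝⁿ be closed with S ∩ C(t) ≠ ∅ for some t ≥ 0, and let θ : graph(C) → [0, +∞] be lower semicontinuous with θ(t,x) > 0 whenever x ∈ C(t)∖S and θ(t,x) = 0 whenever x ∈ C(t) ∩ S. Assume the epigraph of θ is weakly invariant for the augmented dynamics Γ(τ,x,λ) = {1} × (−N_{C(τ)}(x) + G(τ,x)) × {−1}, i.e.: for every (t₀,x₀) ∈ graph(C) and every real λ₀ ≥ θ(t₀,x₀) there exist τ > 0 and a solution x of the perturbed sweeping process on [t₀, t₀ + τ] with x(t₀) = x₀ and θ(t₀ + s, x(t₀ + s)) ≤ λ₀ − s for all s ∈ [0, τ). Then θ(t,x) ≥ T(t,x) for all (t,x) ∈ graph(C), where T is the minimum time function for the target S. -/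
open scoped Pointwise RealInnerProductSpace ENNReal
open Set Metric MeasureTheory

variable {E : Type*} [NormedAddCommGroup E] [InnerProductSpace ℝ E]

section Aux

open Filter
open scoped Topology

lemma aux_ae_small_quot {F : Type*} [NormedAddCommGroup F] [NormedSpace ℝ F] [CompleteSpace F]
    {f : ℝ → F} (hf : Integrable f) :
    ∀ᵐ t : ℝ, Tendsto (fun h : ℝ => ‖(∫ s in t..(t+h), f s) - h • f t‖ / |h|) (𝓝[≠] 0) (𝓝 0) := by
  filter_upwards [IsUnifLocDoublingMeasure.ae_tendsto_average_norm_sub (μ := volume)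
    (hf.locallyIntegrable) 1] with t ht
  have hδ : Tendsto (fun h : ℝ => |h|) (𝓝[≠] (0:ℝ)) (𝓝[>] 0) := by
    refine tendsto_nhdsWithin_iff.2 ⟨?_, ?_⟩
    · simpa using (continuous_abs.tendsto (0:ℝ)).mono_left nhdsWithin_le_nhds
    · filter_upwards [self_mem_nhdsWithin] with h hh; exact abs_pos.2 hh
  have hmem : ∀ᶠ h : ℝ in 𝓝[≠] 0, t ∈ closedBall t (1 * |h|) := by
    filter_upwards with h
    simp [abs_nonneg]
  have A := ht (fun _ => t) (fun h => |h|) hδ hmem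
  have key : ∀ h : ℝ, h ≠ 0 →
      ‖(∫ s in t..(t+h), f s) - h • f t‖ / |h| ≤
        2 * ⨍ y in closedBall t |h|, ‖f y - f t‖ := by
    intro h hh
    have hint : IntervalIntegrable f volume t (t+h) := hf.intervalIntegrable
    have e1 : (∫ s in t..(t+h), f s) - h • f t = ∫ s in t..(t+h), (f s - f t) := by
      rw [intervalIntegral.integral_sub hint intervalIntegrable_const,
        intervalIntegral.integral_const]
      ring_nf
    have hion : IntegrableOn (fun y => ‖f y - f t‖) (closedBall t |h|) volume := by
      refine (hf.integrableOn.sub ?_).norm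
      exact integrableOn_const measure_closedBall_lt_top.ne
    have e2 : ‖∫ s in t..(t+h), (f s - f t)‖ ≤ ∫ y in closedBall t |h|, ‖f y - f t‖ := by
      rw [intervalIntegral.norm_intervalIntegral_eq]
      refine le_trans (norm_integral_le_integral_norm _) ?_
      refine setIntegral_mono_set hion ?_ ?_
      · filter_upwards with y using norm_nonneg _
      · refine Filter.Eventually.of_forall ?_
        intro y hy
        rcases Set.mem_uIoc.1 hy with ⟨h1, h2⟩ | ⟨h1, h2⟩ <;>
        · show y ∈ closedBall t |h|
          rw [Metric.mem_closedBall, Real.dist_eq]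
          rw [abs_le]
          constructor <;> linarith [neg_abs_le h, le_abs_self h, abs_nonneg h]
    have e3 : (∫ y in closedBall t |h|, ‖f y - f t‖) =
        (2 * |h|) * ⨍ y in closedBall t |h|, ‖f y - f t‖ := by
      rw [setAverage_eq, Real.volume_real_closedBall (abs_nonneg _), smul_eq_mul]
      rw [← mul_assoc, mul_inv_cancel₀ (by positivity), one_mul]
    rw [e1, div_le_iff₀ (abs_pos.2 hh)]
    calc ‖∫ s in t..(t+h), (f s - f t)‖ ≤ ∫ y in closedBall t |h|, ‖f y - f t‖ := e2
      _ = (2 * |h|) * ⨍ y in closedBall t |h|, ‖f y - f t‖ := e3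
      _ = 2 * (⨍ y in closedBall t |h|, ‖f y - f t‖) * |h| := by ring
  refine squeeze_zero' ?_ ?_ (by simpa using A.const_mul 2)
  · filter_upwards with h using div_nonneg (norm_nonneg _) (abs_nonneg _)
  · filter_upwards [self_mem_nhdsWithin] with h hh using key h hh


lemma aux_vel_bound [CompleteSpace E]
    {r L_C M L_G : ℝ} (hr : 0 < r) (hL : 0 ≤ L_C) {C : ℝ → Set E} {G : ℝ → E → Set E}
    (hC : HypC r L_C C) (hG : HypG M L_G G) {a b : ℝ} (ha : 0 ≤ a)
    {x x' : ℝ → E} (hmem : ∀ t ∈ Icc a b, x t ∈ C t)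
    (hint : IntegrableOn x' (Icc a b))
    (hid : ∀ t ∈ Icc a b, x t = x a + ∫ s in a..t, x' s)
    (hincl : ∀ᵐ t ∂(volume.restrict (Icc a b)), x' t ∈ -proxNormalCone (C t) (x t) + G t (x t)) :
    ∀ᵐ t ∂(volume.restrict (Icc a b)), ‖x' t‖ ≤ L_C + 2 * M := by
  rcases le_or_gt b a with hba | hab
  · have h0 : volume.restrict (Icc a b) = 0 :=
      Measure.restrict_eq_zero.2 (by rw [Real.volume_Icc]; simp [ENNReal.ofReal_eq_zero, hba])
    rw [h0]; simp
  have hM : 0 ≤ M := by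
    obtain ⟨v, hv⟩ := hG.nonempty 0 0
    exact le_trans (norm_nonneg v) (hG.bounded 0 0 v hv)
  set f := (Icc a b).indicator x' with hf_def
  have hf : Integrable f := (integrable_indicator_iff measurableSet_Icc).2 hint
  have hres : volume.restrict (Icc a b) = volume.restrict (Ioo a b) :=
    (Measure.restrict_congr_set Ioo_ae_eq_Icc).symm
  rw [hres] at hincl ⊢
  filter_upwards [hincl, ae_restrict_of_ae (aux_ae_small_quot hf),
    ae_restrict_mem measurableSet_Ioo] with t hincl_t hq htIoo
  obtain ⟨ht1, ht2⟩ := htIoo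
  have htIcc : t ∈ Icc a b := ⟨le_of_lt ht1, le_of_lt ht2⟩
  have ht0 : 0 ≤ t := le_trans ha (le_of_lt ht1)
  obtain ⟨u0, hu0, g, hg, hsum⟩ := Set.mem_add.1 hincl_t
  have hζ : -u0 ∈ proxNormalCone (C t) (x t) := Set.mem_neg.1 hu0
  set ζ := -u0 with hζ_def
  have hxeq : x' t = -ζ + g := by rw [hζ_def, neg_neg, hsum]
  rcases eq_or_ne ζ 0 with hζ0 | hζne
  · rw [hxeq, hζ0]
    simp only [neg_zero, zero_add]
    have := hG.bounded t (x t) g hg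
    linarith
  -- main case
  set ε := min (t - a) (b - t) with hε_def
  have hε : 0 < ε := lt_min (by linarith) (by linarith)
  have hft : f t = x' t := indicator_of_mem htIcc _
  set u : ℝ → E := fun h => h⁻¹ • (x (t+h) - x t) with hu_def
  have hsub : ∀ h : ℝ, t + h ∈ Icc a b → uIcc t (t+h) ⊆ Icc a b := by
    intro h hth
    rw [uIcc_eq_union]
    exact union_subset (Icc_subset_Icc htIcc.1 hth.2) (Icc_subset_Icc hth.1 htIcc.2)
  have hphi : ∀ h : ℝ, t + h ∈ Icc a b → x (t+h) - x t = ∫ s in t..(t+h), f s := by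
    intro h hth
    have hiA : IntervalIntegrable x' volume a (t+h) := by
      apply IntegrableOn.intervalIntegrable
      apply hint.mono_set
      rw [uIcc_of_le hth.1]
      exact Icc_subset_Icc_right hth.2
    have hiB : IntervalIntegrable x' volume a t := by
      apply IntegrableOn.intervalIntegrable
      apply hint.mono_set
      rw [uIcc_of_le htIcc.1]
      exact Icc_subset_Icc_right htIcc.2
    have e := intervalIntegral.integral_interval_sub_left hiA hiB
    rw [hid _ hth, hid _ htIcc, add_sub_add_left_eq_sub, e]
    exact intervalIntegral.integral_congr (fun s hs => (indicator_of_mem (hsub h hth hs) _).symm)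
  have hball : ∀ᶠ h in 𝓝 (0:ℝ), |h| < ε := by
    have := eventually_abs_sub_lt (0:ℝ) hε
    simpa using this
  have hu_lim : Tendsto u (𝓝[≠] 0) (𝓝 (x' t)) := by
    rw [tendsto_iff_norm_sub_tendsto_zero]
    have hev : ∀ᶠ h in 𝓝[≠] (0:ℝ),
        ‖(∫ s in t..(t+h), f s) - h • f t‖ / |h| = ‖u h - x' t‖ := by
      filter_upwards [hball.filter_mono nhdsWithin_le_nhds, self_mem_nhdsWithin] with h hh hne
      have hne' : h ≠ 0 := hne
      have hth : t + h ∈ Icc a b :=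
        ⟨by have h1 := neg_abs_le h; have := min_le_left (t-a) (b-t); linarith,
         by have h1 := le_abs_self h; have := min_le_right (t-a) (b-t); linarith⟩
      have : u h - x' t = h⁻¹ • ((∫ s in t..(t+h), f s) - h • f t) := by
        rw [hu_def]
        simp only [smul_sub, hphi h hth]
        rw [smul_smul, inv_mul_cancel₀ hne', one_smul, hft]
      rw [this, norm_smul, norm_inv, Real.norm_eq_abs, inv_mul_eq_div]
    exact Tendsto.congr' hev hq
  have hlneb : (𝓝[<] (0:ℝ)).NeBot := inferInstance
  have hul : Tendsto u (𝓝[<] 0) (𝓝 (x' t)) :=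
    hu_lim.mono_left (nhdsWithin_mono 0 (fun h hh => ne_of_lt hh))
  have hev2 : ∀ᶠ h in 𝓝[<] (0:ℝ),
      1/(2*r)*‖ζ‖*(h*(L_C + ‖u h‖)^2) - ‖ζ‖*L_C ≤ ⟪ζ, u h⟫ := by
    filter_upwards [hball.filter_mono nhdsWithin_le_nhds, self_mem_nhdsWithin] with h habs hhneg
    replace hhneg : h < 0 := hhneg
    have hhne : h ≠ 0 := ne_of_lt hhneg
    have hth : t + h ∈ Icc a b :=
      ⟨by have h1 := neg_abs_le h; have := min_le_left (t-a) (b-t); linarith,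
       by have h1 := le_abs_self h; have := min_le_right (t-a) (b-t); linarith⟩
    set w := x (t + h) with hw_def
    have hw : w ∈ C (t + h) := hmem _ hth
    have h0' : (0:ℝ) ≤ t + h := le_trans ha hth.1
    have hcomp : IsCompact (C t) := hC.isCompact t ht0
    have hne : (C t).Nonempty := hC.nonempty t ht0
    obtain ⟨y, hy, hyd⟩ := hcomp.exists_infDist_eq_dist hne w
    have hedist : EMetric.hausdorffEdist (C (t+h)) (C t) ≠ ⊤ :=
      hausdorffEdist_ne_top_of_nonempty_of_bounded (hC.nonempty _ h0') hne
        ((hC.isCompact _ h0').isBounded) hcomp.isBounded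
    have hdy : dist w y ≤ L_C * (-h) := by
      rw [← hyd]
      refine le_trans (infDist_le_hausdorffDist_of_mem hw hedist) ?_
      refine le_trans (hC.lipschitz (t+h) t h0' ht0) ?_
      rw [add_sub_cancel_left, abs_of_neg hhneg]
    have hprox := hC.proxRegular t ht0 (x t) (hmem t htIcc) y hy ζ hζ
    have hsplit : ⟪ζ, w - x t⟫ = ⟪ζ, y - x t⟫ + ⟪ζ, w - y⟫ := by
      rw [← inner_add_right]
      congr 1
      abel
    have hCS : ⟪ζ, w - y⟫ ≤ ‖ζ‖ * (L_C * (-h)) := by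
      refine le_trans (real_inner_le_norm ζ (w - y)) ?_
      have : ‖w - y‖ = dist w y := by rw [dist_eq_norm]
      rw [this]
      exact mul_le_mul_of_nonneg_left hdy (norm_nonneg ζ)
    have hyx : ‖y - x t‖ ≤ L_C * (-h) + ‖w - x t‖ := by
      have h1 : ‖y - x t‖ ≤ ‖y - w‖ + ‖w - x t‖ := by
        have : y - x t = (y - w) + (w - x t) := by abel
        rw [this]
        exact norm_add_le _ _
      have h2 : ‖y - w‖ = dist w y := by rw [← dist_eq_norm, dist_comm]
      linarith
    have hw_eq : w - x t = h • u h := by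
      rw [hu_def]
      simp only []
      rw [smul_smul, mul_inv_cancel₀ hhne, one_smul]
    have hnorm_w : ‖w - x t‖ = (-h) * ‖u h‖ := by
      rw [hw_eq, norm_smul, Real.norm_eq_abs, abs_of_neg hhneg]
    have hinner_w : ⟪ζ, w - x t⟫ = h * ⟪ζ, u h⟫ := by
      rw [hw_eq, real_inner_smul_right]
    have hr2 : 0 ≤ 1/(2*r) := by positivity
    have hζnn : (0:ℝ) ≤ ‖ζ‖ := norm_nonneg ζ
    have hsq : ‖y - x t‖^2 ≤ (L_C * (-h) + ‖w - x t‖)^2 := by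
      have h0 : (0:ℝ) ≤ ‖y - x t‖ := norm_nonneg _
      nlinarith
    have hmain : h * ⟪ζ, u h⟫ ≤
        1/(2*r)*‖ζ‖*((L_C * (-h) + (-h) * ‖u h‖)^2) + ‖ζ‖*(L_C*(-h)) := by
      calc h * ⟪ζ, u h⟫ = ⟪ζ, w - x t⟫ := hinner_w.symm
        _ = ⟪ζ, y - x t⟫ + ⟪ζ, w - y⟫ := hsplit
        _ ≤ 1/(2*r)*‖ζ‖*‖y - x t‖^2 + ‖ζ‖*(L_C*(-h)) := add_le_add hprox hCS
        _ ≤ 1/(2*r)*‖ζ‖*((L_C * (-h) + (-h) * ‖u h‖)^2) + ‖ζ‖*(L_C*(-h)) := by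
            rw [← hnorm_w]
            have := mul_le_mul_of_nonneg_left hsq (mul_nonneg hr2 hζnn)
            linarith
    by_contra hcon
    push_neg at hcon
    have hexp : (L_C * (-h) + (-h) * ‖u h‖)^2 = h^2 * (L_C + ‖u h‖)^2 := by ring
    rw [hexp] at hmain
    have hml := mul_lt_mul_of_neg_left hcon hhneg
    have hre : h * (1/(2*r)*‖ζ‖*(h*(L_C + ‖u h‖)^2) - ‖ζ‖*L_C) =
        1/(2*r)*‖ζ‖*(h^2*(L_C + ‖u h‖)^2) + ‖ζ‖*(L_C*(-h)) := by ring
    rw [hre] at hml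
    linarith
  have hrhs : Tendsto (fun h => 1/(2*r)*‖ζ‖*(h*(L_C + ‖u h‖)^2) - ‖ζ‖*L_C) (𝓝[<] (0:ℝ))
      (𝓝 (1/(2*r)*‖ζ‖*(0*(L_C + ‖x' t‖)^2) - ‖ζ‖*L_C)) := by
    have h1 : Tendsto (fun h : ℝ => h) (𝓝[<] (0:ℝ)) (𝓝 0) := tendsto_id.mono_left nhdsWithin_le_nhds
    exact (((h1.mul ((tendsto_const_nhds.add hul.norm).pow 2)).const_mul _).sub_const _)
  have hlhs : Tendsto (fun h => ⟪ζ, u h⟫) (𝓝[<] (0:ℝ)) (𝓝 ⟪ζ, x' t⟫) :=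
    (tendsto_const_nhds : Tendsto (fun _ : ℝ => ζ) _ _).inner hul
  have hkey : 1/(2*r)*‖ζ‖*(0*(L_C + ‖x' t‖)^2) - ‖ζ‖*L_C ≤ ⟪ζ, x' t⟫ :=
    le_of_tendsto_of_tendsto hrhs hlhs hev2
  have hkey' : -(‖ζ‖*L_C) ≤ ⟪ζ, x' t⟫ := by
    have : 1/(2*r)*‖ζ‖*(0*(L_C + ‖x' t‖)^2) = 0 := by ring
    linarith [hkey, this.symm.le]
  have hgle : ⟪ζ, g⟫ ≤ ‖ζ‖ * M :=
    le_trans (real_inner_le_norm _ _)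
      (mul_le_mul_of_nonneg_left (hG.bounded t (x t) g hg) (norm_nonneg _))
  have hζeq : g - x' t = ζ := by rw [hxeq]; abel
  have hn2 : ‖ζ‖^2 ≤ ‖ζ‖*M + ‖ζ‖*L_C := by
    have e1 : ‖ζ‖^2 = ⟪ζ, g⟫ - ⟪ζ, x' t⟫ := by
      rw [← inner_sub_right, hζeq, real_inner_self_eq_norm_sq]
    linarith
  have hζpos : 0 < ‖ζ‖ := norm_pos_iff.2 hζne
  have hζle : ‖ζ‖ ≤ M + L_C := by nlinarith
  have hgn : ‖g‖ ≤ M := hG.bounded t (x t) g hg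
  calc ‖x' t‖ = ‖-ζ + g‖ := by rw [hxeq]
    _ ≤ ‖ζ‖ + ‖g‖ := by
        refine le_trans (norm_add_le _ _) ?_
        rw [norm_neg]
    _ ≤ L_C + 2*M := by linarith


lemma aux_norm_int {F : Type*} [NormedAddCommGroup F] [NormedSpace ℝ F]
    {x' : ℝ → F} {a b s t K : ℝ} (hK : 0 ≤ K) (hint : IntegrableOn x' (Icc a b))
    (hbd : ∀ᵐ u ∂(volume.restrict (Icc a b)), ‖x' u‖ ≤ K)
    (hs : s ∈ Icc a b) (ht : t ∈ Icc a b) (hst : s ≤ t) :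
    ‖∫ u in s..t, x' u‖ ≤ K * (t - s) := by
  have hsub : uIoc s t ⊆ Icc a b := by
    rw [uIoc_of_le hst]
    exact fun u hu => ⟨le_trans hs.1 (le_of_lt hu.1), le_trans hu.2 ht.2⟩
  have h1 : ∀ᵐ u ∂(volume.restrict (uIoc s t)), ‖x' u‖ ≤ (fun _ => K) u :=
    (hbd.filter_mono (ae_mono (Measure.restrict_mono hsub le_rfl)))
  have h2 := intervalIntegral.norm_integral_le_abs_of_norm_le h1 intervalIntegrable_const
  rw [intervalIntegral.integral_const, smul_eq_mul] at h2
  refine le_trans h2 ?_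
  rw [abs_of_nonneg (mul_nonneg (by linarith) hK), mul_comm]

lemma aux_intervalIntegrable {F : Type*} [NormedAddCommGroup F]
    {x' : ℝ → F} {a b s t : ℝ} (hint : IntegrableOn x' (Icc a b))
    (hs : s ∈ Icc a b) (ht : t ∈ Icc a b) :
    IntervalIntegrable x' volume s t := by
  apply IntegrableOn.intervalIntegrable
  apply hint.mono_set
  rw [uIcc_eq_union]
  exact union_subset (Icc_subset_Icc hs.1 ht.2) (Icc_subset_Icc ht.1 hs.2)

lemma aux_lip [CompleteSpace E] {x x' : ℝ → E} {a b K : ℝ}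
    (hint : IntegrableOn x' (Icc a b))
    (hid : ∀ t ∈ Icc a b, x t = x a + ∫ s in a..t, x' s)
    (hbd : ∀ᵐ u ∂(volume.restrict (Icc a b)), ‖x' u‖ ≤ K) (hK : 0 ≤ K) :
    ∀ s ∈ Icc a b, ∀ t ∈ Icc a b, s ≤ t → ‖x t - x s‖ ≤ K * (t - s) := by
  intro s hs t ht hst
  have e : x t - x s = ∫ u in s..t, x' u := by
    rw [hid t ht, hid s hs, add_sub_add_left_eq_sub]
    exact intervalIntegral.integral_interval_sub_left
      (aux_intervalIntegrable hint ⟨le_rfl, hs.1.trans hs.2⟩ ht)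
      (aux_intervalIntegrable hint ⟨le_rfl, hs.1.trans hs.2⟩ hs)
  rw [e]
  exact aux_norm_int hK hint hbd hs ht hst

lemma aux_restrict {C : ℝ → Set E} {G : ℝ → E → Set E} {a b c : ℝ} {x : ℝ → E}
    (h : IsSweepingSol C G a b x) (hc : c ∈ Icc a b) : IsSweepingSol C G a c x := by
  obtain ⟨hmem, x', hint, hid, hincl⟩ := h
  exact ⟨fun t ht => hmem t ⟨ht.1, le_trans ht.2 hc.2⟩, x',
    hint.mono_set (Icc_subset_Icc_right hc.2),
    fun t ht => hid t ⟨ht.1, le_trans ht.2 hc.2⟩,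
    hincl.filter_mono (ae_mono (Measure.restrict_mono (Icc_subset_Icc_right hc.2) le_rfl))⟩

lemma aux_trivial {C : ℝ → Set E} {G : ℝ → E → Set E} {a : ℝ} {x₀ : E} (hx : x₀ ∈ C a) :
    IsSweepingSol C G a a (fun _ => x₀) := by
  refine ⟨fun t ht => ?_, fun _ => 0, ?_, fun t ht => ?_, ?_⟩
  · rw [Icc_self, mem_singleton_iff] at ht; rw [ht]; exact hx
  · exact (integrable_zero _ _ _).integrableOn
  · rw [Icc_self, mem_singleton_iff] at ht
    rw [ht]
    simp
  · have h0 : volume.restrict (Icc a a) = 0 :=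
      Measure.restrict_eq_zero.2 (by rw [Icc_self]; exact measure_singleton a)
    rw [h0]
    simp

lemma aux_glue {C : ℝ → Set E} {G : ℝ → E → Set E} {a b c : ℝ} {x y : ℝ → E}
    (hab : a ≤ b) (hbc : b ≤ c)
    (hx : IsSweepingSol C G a b x) (hy : IsSweepingSol C G b c y) (hxy : y b = x b) :
    IsSweepingSol C G a c (fun t => if t ≤ b then x t else y t) := by
  obtain ⟨hmx, x', hix, hdx, hcx⟩ := hx
  obtain ⟨hmy, y', hiy, hdy, hcy⟩ := hy
  have hunion : Icc a c = Icc a b ∪ Icc b c := (Icc_union_Icc_eq_Icc hab hbc).symm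
  have hbne : ∀ᵐ t : ℝ, t ≠ b := by
    rw [ae_iff]
    simpa using measure_singleton b
  refine ⟨?_, fun t => if t ≤ b then x' t else y' t, ?_, ?_, ?_⟩
  · intro t ht
    by_cases h : t ≤ b
    · simpa [h] using hmx t ⟨ht.1, h⟩
    · simpa [h] using hmy t ⟨le_of_not_ge h, ht.2⟩
  · rw [hunion]
    apply IntegrableOn.union
    · apply hix.congr_fun_ae
      filter_upwards [ae_restrict_mem measurableSet_Icc] with t ht
      simp [ht.2]
    · apply hiy.congr_fun_ae
      filter_upwards [ae_restrict_of_ae hbne, ae_restrict_mem measurableSet_Icc] with t ht ht2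
      have : ¬ t ≤ b := by
        rcases lt_or_eq_of_le ht2.1 with h | h
        · exact not_le.2 h
        · exact absurd h.symm ht
      simp [this]
  · intro t ht
    by_cases h : t ≤ b
    · have e0 : ∫ s in a..t, (fun u => if u ≤ b then x' u else y' u) s = ∫ s in a..t, x' s :=
        intervalIntegral.integral_congr (fun s hs => by
          rw [uIcc_of_le ht.1] at hs
          simp [hs.2.trans h])
      simp only [if_pos h, if_pos hab]
      rw [e0]
      exact hdx t ⟨ht.1, h⟩
    · push_neg at h
      have hbb : b ∈ Icc a b := ⟨hab, le_rfl⟩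
      have hxb : x b = x a + ∫ s in a..b, x' s := hdx b hbb
      have hyt : y t = y b + ∫ s in b..t, y' s := hdy t ⟨le_of_lt h, ht.2⟩
      have hIac : IntegrableOn (fun t => if t ≤ b then x' t else y' t) (Icc a c) := by
        rw [hunion]
        apply IntegrableOn.union
        · apply hix.congr_fun_ae
          filter_upwards [ae_restrict_mem measurableSet_Icc] with u hu
          simp [hu.2]
        · apply hiy.congr_fun_ae
          filter_upwards [ae_restrict_of_ae hbne, ae_restrict_mem measurableSet_Icc] with u hu hu2
          have : ¬ u ≤ b := by
            rcases lt_or_eq_of_le hu2.1 with h' | h'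
            · exact not_le.2 h'
            · exact absurd h'.symm hu
          simp [this]
      have hsplit : ∫ s in a..t, (fun u => if u ≤ b then x' u else y' u) s =
          (∫ s in a..b, (fun u => if u ≤ b then x' u else y' u) s) +
          ∫ s in b..t, (fun u => if u ≤ b then x' u else y' u) s :=
        (intervalIntegral.integral_add_adjacent_intervals
          (aux_intervalIntegrable hIac ⟨le_rfl, hab.trans hbc⟩ ⟨hab, hbc⟩)
          (aux_intervalIntegrable hIac ⟨hab, hbc⟩ ht)).symm
      have e1 : ∫ s in a..b, (fun u => if u ≤ b then x' u else y' u) s = ∫ s in a..b, x' s := by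
        apply intervalIntegral.integral_congr
        intro s hs
        rw [uIcc_of_le hab] at hs
        simp [hs.2]
      have e2 : ∫ s in b..t, (fun u => if u ≤ b then x' u else y' u) s = ∫ s in b..t, y' s := by
        apply intervalIntegral.integral_congr_ae
        filter_upwards [hbne] with s hsne hs
        rw [uIoc_of_le (le_of_lt h)] at hs
        have : ¬ s ≤ b := not_le.2 (lt_of_le_of_ne hs.1.le (Ne.symm hsne))
        simp [this]
      simp only [if_neg (not_le.2 h), if_pos (le_refl a |>.trans hab)]
      rw [hyt, hxy, hxb, hsplit, e1, e2]
      abel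
  · have hle : volume.restrict (Icc a c) ≤
        volume.restrict (Icc a b) + volume.restrict (Icc b c) := by
      rw [hunion]
      exact Measure.restrict_union_le _ _
    have H1 : ∀ᵐ t ∂(volume.restrict (Icc a b)),
        (fun u => if u ≤ b then x' u else y' u) t ∈
          -proxNormalCone (C t) ((fun u => if u ≤ b then x u else y u) t) +
            G t ((fun u => if u ≤ b then x u else y u) t) := by
      filter_upwards [hcx, ae_restrict_mem measurableSet_Icc] with t h1 h2
      simp only [if_pos h2.2]
      exact h1
    have H2 : ∀ᵐ t ∂(volume.restrict (Icc b c)),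
        (fun u => if u ≤ b then x' u else y' u) t ∈
          -proxNormalCone (C t) ((fun u => if u ≤ b then x u else y u) t) +
            G t ((fun u => if u ≤ b then x u else y u) t) := by
      filter_upwards [hcy, ae_restrict_of_ae hbne, ae_restrict_mem measurableSet_Icc]
        with t h1 hne h2
      have hnle : ¬ t ≤ b := by
        rcases lt_or_eq_of_le h2.1 with h' | h'
        · exact not_le.2 h'
        · exact absurd h'.symm hne
      simp only [if_neg hnle]
      exact h1
    exact Filter.Eventually.filter_mono (ae_mono hle) ((ae_add_measure_iff).2 ⟨H1, H2⟩)

end Aux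


section Chain

open Filter
open scoped Topology

variable {E : Type*} [NormedAddCommGroup E] [InnerProductSpace ℝ E]

/-- Partial solutions with the θ-decrease property. -/
def GoodP (C : ℝ → Set E) (G : ℝ → E → Set E) (θ : ℝ → E → ℝ≥0∞) (t₀ : ℝ) (x₀ : E) (l₀ : ℝ)
    (p : ℝ × (ℝ → E)) : Prop :=
  0 ≤ p.1 ∧ p.1 ≤ l₀ ∧ IsSweepingSol C G t₀ (t₀ + p.1) p.2 ∧ p.2 t₀ = x₀ ∧
    ∀ s ∈ Icc (0:ℝ) p.1, θ (t₀ + s) (p.2 (t₀ + s)) ≤ ENNReal.ofReal (l₀ - s)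

/-- Extension order on partial solutions. -/
def RP (t₀ : ℝ) (p q : ℝ × (ℝ → E)) : Prop :=
  p.1 ≤ q.1 ∧ ∀ u ∈ Icc t₀ (t₀ + p.1), q.2 u = p.2 u

lemma RP_refl (t₀ : ℝ) (p : ℝ × (ℝ → E)) : RP t₀ p p := ⟨le_rfl, fun _ _ => rfl⟩

lemma RP_trans {t₀ : ℝ} {p q s : ℝ × (ℝ → E)} (h1 : RP t₀ p q) (h2 : RP t₀ q s) : RP t₀ p s :=
  ⟨h1.1.trans h2.1, fun u hu => by
    rw [h2.2 u ⟨hu.1, hu.2.trans (by linarith [h1.1])⟩, h1.2 u hu]⟩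

lemma aux_chain_ub [CompleteSpace E]
    {r L_C M L_G : ℝ} (hr : 0 < r) (hL : 0 ≤ L_C) (hM : 0 ≤ M)
    {C : ℝ → Set E} {G : ℝ → E → Set E}
    (hC : HypC r L_C C) (hG : HypG M L_G G)
    {θ : ℝ → E → ℝ≥0∞}
    (hθlsc : LowerSemicontinuousOn (fun q : ℝ × E => θ q.1 q.2) (graphSet C))
    {t₀ : ℝ} {x₀ : E} {l₀ : ℝ} (ht₀ : 0 ≤ t₀)
    {c : Set (ℝ × (ℝ → E))} (hcG : ∀ p ∈ c, GoodP C G θ t₀ x₀ l₀ p)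
    (hchain : IsChain (RP t₀) c) (hcne : c.Nonempty) :
    ∃ ub, GoodP C G θ t₀ x₀ l₀ ub ∧ ∀ p ∈ c, RP t₀ p ub := by
  classical
  set K := L_C + 2 * M with hK_def
  have hK : 0 ≤ K := by rw [hK_def]; linarith
  have htot : ∀ p ∈ c, ∀ q ∈ c, RP t₀ p q ∨ RP t₀ q p := by
    intro p hp q hq
    rcases eq_or_ne p q with rfl | hne
    · exact Or.inl (RP_refl t₀ p)
    · exact hchain hp hq hne
  set A := (fun p : ℝ × (ℝ → E) => p.1) '' c with hA_def
  have hAne : A.Nonempty := hcne.image _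
  have hAbd : BddAbove A := by
    refine ⟨l₀, ?_⟩
    rintro v ⟨p, hp, rfl⟩
    exact (hcG p hp).2.1
  set aE := sSup A with haE_def
  have haE_le : aE ≤ l₀ := csSup_le hAne (by rintro v ⟨p, hp, rfl⟩; exact (hcG p hp).2.1)
  have hmemle : ∀ p ∈ c, p.1 ≤ aE := fun p hp => le_csSup hAbd ⟨p, hp, rfl⟩
  by_cases hatt : ∃ p ∈ c, p.1 = aE
  · obtain ⟨p, hpc, hpa⟩ := hatt
    refine ⟨p, hcG p hpc, fun q hq => ?_⟩
    rcases htot q hq p hpc with h | h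
    · exact h
    · have hq1 : q.1 ≤ p.1 := by rw [hpa]; exact hmemle q hq
      exact ⟨hq1, fun u hu => (h.2 u ⟨hu.1, hu.2.trans (by linarith [hq1])⟩).symm⟩
  · push_neg at hatt
    have hlt : ∀ p ∈ c, p.1 < aE := fun p hp => lt_of_le_of_ne (hmemle p hp) (hatt p hp)
    have hex : ∀ v : ℝ, v < aE → ∃ p ∈ c, v < p.1 := by
      intro v hv
      obtain ⟨w, hwA, hw⟩ := exists_lt_of_lt_csSup hAne hv
      obtain ⟨p, hp, rfl⟩ := hwA
      exact ⟨p, hp, hw⟩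
    obtain ⟨p₀, hp₀⟩ := hcne
    have hstep : ∀ p : ℝ × (ℝ → E), p ∈ c → ∀ k : ℕ, ∃ p',
        p' ∈ c ∧ p.1 < p'.1 ∧ aE - 1/((k:ℝ)+1) < p'.1 := by
      intro p hp k
      obtain ⟨p', hp', hgt⟩ := hex (max p.1 (aE - 1/((k:ℝ)+1)))
        (max_lt (hlt p hp) (by
          have h1 : (0:ℝ) < 1/((k:ℝ)+1) := by positivity
          linarith))
      exact ⟨p', hp', lt_of_le_of_lt (le_max_left _ _) hgt,
        lt_of_le_of_lt (le_max_right _ _) hgt⟩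
    choose! F hF1 hF2 hF3 using hstep
    let q : ℕ → ℝ × (ℝ → E) := fun k => Nat.rec (F p₀ 0) (fun k qk => F qk (k+1)) k
    have hq0 : q 0 = F p₀ 0 := rfl
    have hqs : ∀ k, q (k+1) = F (q k) (k+1) := fun _ => rfl
    have hqc : ∀ k, q k ∈ c := by
      intro k
      induction k with
      | zero => exact hF1 p₀ hp₀ 0
      | succ k ih => exact hF1 (q k) ih (k+1)
    have hqG : ∀ k, GoodP C G θ t₀ x₀ l₀ (q k) := fun k => hcG _ (hqc k)
    set av : ℕ → ℝ := fun k => (q k).1 with hav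
    have hmono1 : ∀ k, av k < av (k+1) := by
      intro k
      have := hF2 (q k) (hqc k) (k+1)
      rw [← hqs k] at this
      exact this
    have hsm : StrictMono av := strictMono_nat_of_lt_succ hmono1
    have hamono : Monotone av := hsm.monotone
    have hlow : ∀ k : ℕ, aE - 1/((k:ℝ)+1) < av k := by
      intro k
      cases k with
      | zero =>
        have := hF3 p₀ hp₀ 0
        rw [← hq0] at this
        exact_mod_cast this
      | succ k =>
        have := hF3 (q k) (hqc k) (k+1)
        rw [← hqs k] at this
        exact_mod_cast this
    have havE : ∀ k, av k < aE := fun k => hlt _ (hqc k)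
    have hav0 : ∀ k, 0 ≤ av k := fun k => (hqG k).1
    have haE0 : 0 ≤ aE := le_trans (hav0 0) (le_of_lt (havE 0))
    have haE0' : t₀ ≤ t₀ + aE := by linarith
    have htend : Tendsto av atTop (𝓝 aE) := by
      refine tendsto_of_tendsto_of_tendsto_of_le_of_le
        (g := fun k : ℕ => aE - 1/((k:ℝ)+1)) (h := fun _ : ℕ => aE) ?_ tendsto_const_nhds
        (fun k => (hlow k).le) (fun k => (havE k).le)
      have h1 : Tendsto (fun k : ℕ => 1/((k:ℝ)+1)) atTop (𝓝 0) :=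
        tendsto_one_div_add_atTop_nhds_zero_nat
      simpa using (tendsto_const_nhds.sub h1)
    have hRle : ∀ j k, j ≤ k → RP t₀ (q j) (q k) := by
      intro j k hjk
      induction k with
      | zero =>
        have : j = 0 := Nat.le_zero.1 hjk
        rw [this]
        exact RP_refl t₀ _
      | succ k ih =>
        rcases Nat.eq_or_lt_of_le hjk with h | h
        · rw [h]; exact RP_refl t₀ _
        · refine RP_trans (ih (Nat.lt_succ_iff.1 h)) ?_
          rcases htot (q k) (hqc k) (q (k+1)) (hqc (k+1)) with h' | h'
          · exact h'
          · exact absurd h'.1 (not_le.2 (hmono1 k))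
    have hagree : ∀ j k, j ≤ k → ∀ u ∈ Icc t₀ (t₀ + av j), (q k).2 u = (q j).2 u :=
      fun j k h => (hRle j k h).2
    have hsolk : ∀ k, IsSweepingSol C G t₀ (t₀ + av k) ((q k).2) := fun k => (hqG k).2.2.1
    have hexk : ∀ k, ∃ w : ℝ → E, IntegrableOn w (Icc t₀ (t₀ + av k)) ∧
        (∀ u ∈ Icc t₀ (t₀ + av k), (q k).2 u = (q k).2 t₀ + ∫ s in t₀..u, w s) ∧
        ∀ᵐ u ∂(volume.restrict (Icc t₀ (t₀ + av k))),
          w u ∈ -proxNormalCone (C u) ((q k).2 u) + G u ((q k).2 u) := fun k => (hsolk k).2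
    choose W hWint hWid hWincl using hexk
    have hWbd : ∀ k, ∀ᵐ u ∂(volume.restrict (Icc t₀ (t₀ + av k))), ‖W k u‖ ≤ K :=
      fun k => aux_vel_bound hr hL hC hG ht₀ (hsolk k).1 (hWint k) (hWid k) (hWincl k)
    have hlipk : ∀ k, ∀ s ∈ Icc t₀ (t₀ + av k), ∀ u ∈ Icc t₀ (t₀ + av k), s ≤ u →
        ‖(q k).2 u - (q k).2 s‖ ≤ K * (u - s) :=
      fun k => aux_lip (hWint k) (hWid k) (hWbd k) hK
    set pts : ℕ → E := fun k => (q k).2 (t₀ + av k) with hpts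
    have hptsagree : ∀ j k, j ≤ k → (q k).2 (t₀ + av j) = pts j :=
      fun j k h => hagree j k h _ ⟨by linarith [hav0 j], le_rfl⟩
    have hcau : CauchySeq pts := by
      apply cauchySeq_of_le_tendsto_0 (fun N => K * (aE - av N))
      · intro n m N hn hm
        wlog hnm : n ≤ m generalizing n m
        · rw [dist_comm]
          exact this m n hm hn (le_of_not_ge hnm)
        have hmm : av n ≤ av m := hamono hnm
        have h1 := hlipk m (t₀ + av n) ⟨by linarith [hav0 n], by linarith⟩
          (t₀ + av m) ⟨by linarith [hav0 m], le_rfl⟩ (by linarith)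
        calc dist (pts n) (pts m) = ‖(q m).2 (t₀+av m) - (q m).2 (t₀+av n)‖ := by
              rw [dist_comm, dist_eq_norm, hptsagree n m hnm]
          _ ≤ K * ((t₀ + av m) - (t₀ + av n)) := h1
          _ ≤ K * (aE - av N) := by
              apply mul_le_mul_of_nonneg_left ?_ hK
              have h2 := havE m
              have h3 := hamono hn
              linarith
      · have h0 : Tendsto (fun N => aE - av N) atTop (𝓝 0) := by
          simpa using ((tendsto_const_nhds (x := aE)).sub htend)
        simpa using h0.const_mul K
    obtain ⟨z, hz⟩ := cauchySeq_tendsto_of_complete hcau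
    set xI : ℝ → E := fun u => if h : ∃ k, u ≤ t₀ + av k then (q (Nat.find h)).2 u else z
      with hxI
    set WI : ℝ → E := fun u => if h : ∃ k, u ≤ t₀ + av k then W (Nat.find h) u else 0
      with hWI
    have hxIlt : ∀ u k, t₀ ≤ u → u ≤ t₀ + av k → xI u = (q k).2 u := by
      intro u k hu1 hu2
      have hexu : ∃ j, u ≤ t₀ + av j := ⟨k, hu2⟩
      rw [hxI]
      simp only [dif_pos hexu]
      have hfind := Nat.find_spec hexu
      rcases le_total (Nat.find hexu) k with h | h
      · exact (hagree _ k h u ⟨hu1, hfind⟩).symm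
      · exact hagree k _ h u ⟨hu1, hu2⟩
    have hnotend : ¬ ∃ k, (t₀ + aE) ≤ t₀ + av k := by
      rintro ⟨k, hk⟩
      exact absurd (havE k) (not_lt.2 (by linarith))
    have hxIend : xI (t₀ + aE) = z := by rw [hxI]; exact dif_neg hnotend
    have hcov : ∀ u, u < t₀ + aE → ∃ k, u ≤ t₀ + av k := by
      intro u hu
      rcases le_or_gt u t₀ with h | h
      · exact ⟨0, by linarith [hav0 0]⟩
      · obtain ⟨k, hk⟩ := exists_nat_one_div_lt (show 0 < t₀ + aE - u by linarith)
        refine ⟨k, ?_⟩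
        have h2 := hlow k
        linarith
    set T : ℕ → Set ℝ := fun k =>
      Nat.casesOn k (Icc t₀ (t₀ + av 0)) (fun j => Ioc (t₀ + av j) (t₀ + av (j+1))) with hT
    have hTmeas : ∀ k, MeasurableSet (T k) := by
      intro k
      cases k
      · exact measurableSet_Icc
      · exact measurableSet_Ioc
    have hTsub : ∀ k, T k ⊆ Icc t₀ (t₀ + av k) := by
      intro k u hu
      cases k with
      | zero => exact hu
      | succ j =>
        have hu' : u ∈ Ioc (t₀ + av j) (t₀ + av (j+1)) := hu
        exact ⟨by linarith [hav0 j, hu'.1], hu'.2⟩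
    have hTfind : ∀ k u, u ∈ T k → ∃ h : ∃ j, u ≤ t₀ + av j, Nat.find h = k := by
      intro k u hu
      cases k with
      | zero => exact ⟨⟨0, hu.2⟩, (Nat.find_eq_zero _).2 hu.2⟩
      | succ j =>
        have he : ∃ i, u ≤ t₀ + av i := ⟨j+1, hu.2⟩
        refine ⟨he, ?_⟩
        rw [Nat.find_eq_iff]
        refine ⟨hu.2, ?_⟩
        intro i hi
        have h1 : av i ≤ av j := hamono (Nat.lt_succ_iff.1 hi)
        have h2 := hu.1
        exact not_le.2 (by linarith)
    have hWIT : ∀ k, ∀ u ∈ T k, WI u = W k u := by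
      intro k u hu
      obtain ⟨he, hf⟩ := hTfind k u hu
      rw [hWI]
      simp only [dif_pos he, hf]
    have hxIT : ∀ k, ∀ u ∈ T k, xI u = (q k).2 u := by
      intro k u hu
      exact hxIlt u k (hTsub k hu).1 (hTsub k hu).2
    have hIccE_sub : Icc t₀ (t₀ + aE) ⊆ (⋃ k, T k) ∪ {t₀ + aE} := by
      intro u hu
      rcases eq_or_lt_of_le hu.2 with h | h
      · right
        rw [mem_singleton_iff]
        exact h
      · left
        have he : ∃ j, u ≤ t₀ + av j := hcov u h
        cases hfind : Nat.find he with
        | zero =>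
          refine mem_iUnion.2 ⟨0, hu.1, ?_⟩
          have := Nat.find_spec he
          rwa [hfind] at this
        | succ j =>
          have hspec := Nat.find_spec he
          rw [hfind] at hspec
          have hmin := Nat.find_min he (show j < Nat.find he by rw [hfind]; exact Nat.lt_succ_self j)
          exact mem_iUnion.2 ⟨j+1, not_le.1 hmin, hspec⟩
    have hrle1 : volume.restrict (Icc t₀ (t₀ + aE)) ≤
        volume.restrict ((⋃ k, T k) ∪ {t₀ + aE}) := Measure.restrict_mono hIccE_sub le_rfl
    have hrle2 : volume.restrict ((⋃ k, T k) ∪ {t₀ + aE} : Set ℝ) ≤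
        volume.restrict (⋃ k, T k) + volume.restrict {t₀ + aE} := Measure.restrict_union_le _ _
    have hsing0 : volume.restrict ({t₀ + aE} : Set ℝ) = 0 :=
      Measure.restrict_eq_zero.2 (measure_singleton _)
    have hWIbd : ∀ᵐ u ∂(volume.restrict (Icc t₀ (t₀ + aE))), ‖WI u‖ ≤ K := by
      refine Filter.Eventually.filter_mono (ae_mono (hrle1.trans hrle2)) ?_
      rw [ae_add_measure_iff]
      constructor
      · rw [ae_restrict_iUnion_iff]
        intro k
        filter_upwards [(hWbd k).filter_mono (ae_mono (Measure.restrict_mono (hTsub k) le_rfl)),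
          ae_restrict_mem (hTmeas k)] with u h1 h2
        rw [hWIT k u h2]
        exact h1
      · rw [hsing0]
        simp
    have hWIaesm : AEStronglyMeasurable WI (volume.restrict (Icc t₀ (t₀ + aE))) := by
      refine AEStronglyMeasurable.mono_measure ?_ (hrle1.trans hrle2)
      rw [aestronglyMeasurable_add_measure_iff]
      constructor
      · rw [aestronglyMeasurable_iUnion_iff]
        intro k
        have h1 : AEStronglyMeasurable (W k) (volume.restrict (T k)) :=
          ((hWint k).aestronglyMeasurable).mono_measure
            (Measure.restrict_mono (hTsub k) le_rfl)
        apply h1.congr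
        filter_upwards [ae_restrict_mem (hTmeas k)] with u hu
        exact (hWIT k u hu).symm
      · rw [hsing0]
        exact aestronglyMeasurable_zero_measure _
    have hWIint : IntegrableOn WI (Icc t₀ (t₀ + aE)) := by
      refine Integrable.mono' (g := fun _ => K) ?_ hWIaesm hWIbd
      exact integrableOn_const measure_Icc_lt_top.ne
    have hx₀k : ∀ k, (q k).2 t₀ = x₀ := fun k => (hqG k).2.2.2.1
    have hWIsub : ∀ k, IntegrableOn WI (Icc t₀ (t₀ + av k)) :=
      fun k => hWIint.mono_set (Icc_subset_Icc_right (by linarith [havE k]))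
    have Hid : ∀ k, ∀ u ∈ Icc t₀ (t₀ + av k), xI u = x₀ + ∫ s in t₀..u, WI s := by
      intro k
      induction k with
      | zero =>
        intro u hu
        rw [hxIlt u 0 hu.1 hu.2, hWid 0 u hu, hx₀k 0]
        congr 1
        apply intervalIntegral.integral_congr
        intro s hs
        rw [uIcc_of_le hu.1] at hs
        exact (hWIT 0 s ⟨hs.1, hs.2.trans hu.2⟩).symm
      | succ k ih =>
        intro u hu
        rcases le_or_gt u (t₀ + av k) with h | h
        · exact ih u ⟨hu.1, h⟩
        · have hk0 : t₀ ≤ t₀ + av k := by linarith [hav0 k]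
          have hkk : t₀ + av k ≤ t₀ + av (k+1) := by linarith [hamono (Nat.le_succ k)]
          have hk1 : t₀ + av k ∈ Icc t₀ (t₀ + av k) := ⟨hk0, le_rfl⟩
          have hsplit : ∫ s in t₀..u, WI s =
              (∫ s in t₀..(t₀ + av k), WI s) + ∫ s in (t₀ + av k)..u, WI s :=
            (intervalIntegral.integral_add_adjacent_intervals
              (aux_intervalIntegrable (hWIsub (k+1)) ⟨le_rfl, by linarith [hav0 (k+1)]⟩
                ⟨hk0, hkk⟩)
              (aux_intervalIntegrable (hWIsub (k+1)) ⟨hk0, hkk⟩ hu)).symm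
          have e2 : ∫ s in (t₀ + av k)..u, WI s = ∫ s in (t₀ + av k)..u, W (k+1) s := by
            apply intervalIntegral.integral_congr_ae
            apply Eventually.of_forall
            intro s hs
            rw [uIoc_of_le h.le] at hs
            exact hWIT (k+1) s ⟨hs.1, hs.2.trans hu.2⟩
          have e3 : ∫ s in (t₀ + av k)..u, W (k+1) s =
              (q (k+1)).2 u - (q (k+1)).2 (t₀ + av k) := by
            have hA := hWid (k+1) u hu
            have hB := hWid (k+1) (t₀ + av k) ⟨hk0, hkk⟩
            have hsub2 := intervalIntegral.integral_interval_sub_left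
              (aux_intervalIntegrable (hWint (k+1)) ⟨le_rfl, by linarith [hav0 (k+1)]⟩ hu)
              (aux_intervalIntegrable (hWint (k+1)) ⟨le_rfl, by linarith [hav0 (k+1)]⟩
                ⟨hk0, hkk⟩)
            rw [hA, hB, ← hsub2]
            abel
          have e4 : xI (t₀ + av k) = (q (k+1)).2 (t₀ + av k) := hxIlt _ (k+1) hk0 hkk
          have e5 := ih (t₀ + av k) hk1
          rw [hxIlt u (k+1) hu.1 hu.2, hsplit, e2, e3]
          have e6 : (∫ s in t₀..(t₀ + av k), WI s) = (q (k+1)).2 (t₀ + av k) - x₀ := by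
            rw [← e4, e5]
            abel
          rw [e6]
          abel
    have hxIt₀ : xI t₀ = x₀ := by
      rw [hxIlt t₀ 0 le_rfl (by linarith [hav0 0])]
      exact hx₀k 0
    have hptsid : ∀ k, pts k = x₀ + ∫ s in t₀..(t₀ + av k), WI s := by
      intro k
      have h1 := Hid k (t₀ + av k) ⟨by linarith [hav0 k], le_rfl⟩
      rw [← h1]
      exact (hxIlt _ k (by linarith [hav0 k]) le_rfl).symm
    have htint : Tendsto (fun k => ∫ s in t₀..(t₀ + av k), WI s) atTop
        (𝓝 (∫ s in t₀..(t₀ + aE), WI s)) := by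
      rw [tendsto_iff_norm_sub_tendsto_zero]
      have hdiff : ∀ k, ‖(∫ s in t₀..(t₀ + av k), WI s) - ∫ s in t₀..(t₀ + aE), WI s‖ ≤
          K * (aE - av k) := by
        intro k
        have hmem0 : t₀ ∈ Icc t₀ (t₀ + aE) := ⟨le_rfl, haE0'⟩
        have hmemE : t₀ + aE ∈ Icc t₀ (t₀ + aE) := ⟨haE0', le_rfl⟩
        have hmemk : t₀ + av k ∈ Icc t₀ (t₀ + aE) :=
          ⟨by linarith [hav0 k], by linarith [havE k]⟩
        have hsub2 := intervalIntegral.integral_interval_sub_left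
          (aux_intervalIntegrable hWIint hmem0 hmemk)
          (aux_intervalIntegrable hWIint hmem0 hmemE)
        rw [hsub2, intervalIntegral.integral_symm, norm_neg]
        have h5 := aux_norm_int hK hWIint hWIbd hmemk hmemE (by linarith [havE k])
        calc ‖∫ s in (t₀ + av k)..(t₀ + aE), WI s‖ ≤ K * ((t₀ + aE) - (t₀ + av k)) := h5
          _ = K * (aE - av k) := by ring
      apply squeeze_zero (fun k => norm_nonneg _) hdiff
      have h0 : Tendsto (fun N => aE - av N) atTop (𝓝 0) := by
        simpa using ((tendsto_const_nhds (x := aE)).sub htend)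
      simpa using h0.const_mul K
    have hzid : z = x₀ + ∫ s in t₀..(t₀ + aE), WI s := by
      have hz2 : Tendsto pts atTop (𝓝 (x₀ + ∫ s in t₀..(t₀ + aE), WI s)) :=
        ((tendsto_const_nhds (x := x₀)).add htint).congr (fun k => (hptsid k).symm)
      exact tendsto_nhds_unique hz hz2
    have HidI : ∀ u ∈ Icc t₀ (t₀ + aE), xI u = xI t₀ + ∫ s in t₀..u, WI s := by
      intro u hu
      rw [hxIt₀]
      rcases eq_or_lt_of_le hu.2 with h | h
      · rw [h, hxIend]
        exact hzid
      · obtain ⟨k, hk⟩ := hcov u h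
        exact Hid k u ⟨hu.1, hk⟩
    have hptsC : ∀ k, pts k ∈ C (t₀ + av k) :=
      fun k => (hsolk k).1 _ ⟨by linarith [hav0 k], le_rfl⟩
    have hzC : z ∈ C (t₀ + aE) := by
      have hCcl : IsClosed (C (t₀ + aE)) := (hC.isCompact _ (by linarith)).isClosed
      have hCne : (C (t₀ + aE)).Nonempty := hC.nonempty _ (by linarith)
      rw [hCcl.mem_iff_infDist_zero hCne]
      have hbound : ∀ k, infDist z (C (t₀ + aE)) ≤ dist z (pts k) + L_C * (aE - av k) := by
        intro k
        have h0k : (0:ℝ) ≤ t₀ + av k := by linarith [hav0 k]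
        have hne : EMetric.hausdorffEdist (C (t₀ + av k)) (C (t₀ + aE)) ≠ ⊤ :=
          hausdorffEdist_ne_top_of_nonempty_of_bounded (hC.nonempty _ h0k) hCne
            ((hC.isCompact _ h0k).isBounded) (hC.isCompact _ (by linarith)).isBounded
        have h1 : infDist z (C (t₀ + aE)) ≤ infDist (pts k) (C (t₀ + aE)) + dist z (pts k) :=
          infDist_le_infDist_add_dist
        have h2 : infDist (pts k) (C (t₀ + aE)) ≤ hausdorffDist (C (t₀ + av k)) (C (t₀ + aE)) :=
          infDist_le_hausdorffDist_of_mem (hptsC k) hne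
        have h3 := hC.lipschitz (t₀ + av k) (t₀ + aE) h0k (by linarith)
        have h4 : |t₀ + av k - (t₀ + aE)| = aE - av k := by
          rw [abs_of_nonpos (by linarith [havE k])]
          ring
        rw [h4] at h3
        linarith
      have htend0 : Tendsto (fun k => dist z (pts k) + L_C * (aE - av k)) atTop (𝓝 0) := by
        have h1 : Tendsto (fun k => dist z (pts k)) atTop (𝓝 0) := by
          have := (tendsto_const_nhds (x := z)).dist hz
          simpa using this
        have h2 : Tendsto (fun k => L_C * (aE - av k)) atTop (𝓝 0) := by
          have h0 : Tendsto (fun N => aE - av N) atTop (𝓝 0) := by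
            simpa using ((tendsto_const_nhds (x := aE)).sub htend)
          simpa using h0.const_mul L_C
        simpa using h1.add h2
      have hle0 : infDist z (C (t₀ + aE)) ≤ 0 :=
        le_of_tendsto_of_tendsto' tendsto_const_nhds htend0 hbound
      exact le_antisymm hle0 infDist_nonneg
    have hmemI : ∀ u ∈ Icc t₀ (t₀ + aE), xI u ∈ C u := by
      intro u hu
      rcases eq_or_lt_of_le hu.2 with h | h
      · rw [h, hxIend]
        exact hzC
      · obtain ⟨k, hk⟩ := hcov u h
        rw [hxIlt u k hu.1 hk]
        exact (hsolk k).1 u ⟨hu.1, hk⟩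
    have hinclI : ∀ᵐ u ∂(volume.restrict (Icc t₀ (t₀ + aE))),
        WI u ∈ -proxNormalCone (C u) (xI u) + G u (xI u) := by
      refine Filter.Eventually.filter_mono (ae_mono (hrle1.trans hrle2)) ?_
      rw [ae_add_measure_iff]
      constructor
      · rw [ae_restrict_iUnion_iff]
        intro k
        filter_upwards [(hWincl k).filter_mono
          (ae_mono (Measure.restrict_mono (hTsub k) le_rfl)),
          ae_restrict_mem (hTmeas k)] with u h1 h2
        rw [hWIT k u h2, hxIT k u h2]
        exact h1
      · rw [hsing0]
        simp
    have hθI : ∀ s ∈ Icc (0:ℝ) aE, θ (t₀ + s) (xI (t₀ + s)) ≤ ENNReal.ofReal (l₀ - s) := by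
      intro s hs
      rcases eq_or_lt_of_le hs.2 with h | h
      · rw [h, hxIend]
        by_contra hcon
        push_neg at hcon
        obtain ⟨b, hb1, hb2⟩ := exists_between hcon
        have hgm : ((t₀ + aE : ℝ), z) ∈ graphSet C := ⟨by simp only; linarith, hzC⟩
        have hlsc := hθlsc ((t₀ + aE : ℝ), z) hgm b hb2
        have hseq : Tendsto (fun k => ((t₀ + av k : ℝ), pts k)) atTop
            (𝓝[graphSet C] ((t₀ + aE : ℝ), z)) := by
          rw [tendsto_nhdsWithin_iff]
          constructor
          · exact ((tendsto_const_nhds (x := t₀)).add htend).prodMk_nhds hz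
          · apply Eventually.of_forall
            intro k
            exact ⟨by simp only; linarith [hav0 k], hptsC k⟩
        have hev1 := hseq.eventually hlsc
        have hbd : ∀ k, θ (t₀ + av k) (pts k) ≤ ENNReal.ofReal (l₀ - av k) :=
          fun k => (hqG k).2.2.2.2 (av k) ⟨hav0 k, le_rfl⟩
        have htof : Tendsto (fun k => ENNReal.ofReal (l₀ - av k)) atTop
            (𝓝 (ENNReal.ofReal (l₀ - aE))) :=
          (ENNReal.continuous_ofReal.tendsto _).comp ((tendsto_const_nhds (x := l₀)).sub htend)
        have hev2 : ∀ᶠ k in atTop, ENNReal.ofReal (l₀ - av k) < b :=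
          htof.eventually_lt_const hb1
        obtain ⟨k, h1, h2⟩ := (hev1.and hev2).exists
        exact absurd (lt_of_le_of_lt (hbd k) h2) (not_lt.2 h1.le)
      · obtain ⟨k, hk⟩ := hcov (t₀ + s) (by linarith)
        have hk' : s ≤ av k := by linarith
        rw [hxIlt (t₀ + s) k (by linarith [hs.1]) hk]
        exact (hqG k).2.2.2.2 s ⟨hs.1, hk'⟩
    refine ⟨(aE, xI), ⟨haE0, haE_le, ⟨hmemI, WI, hWIint, HidI, hinclI⟩, hxIt₀, hθI⟩, ?_⟩
    intro p hp
    refine ⟨hmemle p hp, ?_⟩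
    intro u hu
    have hplt : p.1 < aE := hlt p hp
    have hevk : ∀ᶠ k in atTop, p.1 < av k := htend.eventually_const_lt hplt
    obtain ⟨k, hk⟩ := hevk.exists
    rcases htot p hp (q k) (hqc k) with h | h
    · show xI u = p.2 u
      rw [hxIlt u k hu.1 (hu.2.trans (by linarith))]
      exact h.2 u hu
    · exact absurd h.1 (not_le.2 hk)

end Chain

/-- comparison principle (lower bound side). If `θ : graph(C) → [0,∞]` is lsc,
positive outside the target, zero on the target, and its epigraph is weakly invariant for the
augmented dynamics, then `θ ≥ T` on the graph of `C`. -/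
theorem comparison_epigraph_weakly_invariant {n : ℕ} (r L_C M L_G : ℝ) (hr : 0 < r)
    (C : ℝ → Set (EuclideanSpace ℝ (Fin n)))
    (G : ℝ → EuclideanSpace ℝ (Fin n) → Set (EuclideanSpace ℝ (Fin n)))
    (hC : HypC r L_C C) (hG : HypG M L_G G)
    (S : Set (EuclideanSpace ℝ (Fin n))) (hS : IsClosed S)
    (hSC : ∃ t, 0 ≤ t ∧ (S ∩ C t).Nonempty)
    (θ : ℝ → EuclideanSpace ℝ (Fin n) → ℝ≥0∞)
    (hθlsc : LowerSemicontinuousOn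
      (fun q : ℝ × EuclideanSpace ℝ (Fin n) => θ q.1 q.2) (graphSet C))
    (hθpos : ∀ t x, 0 ≤ t → x ∈ C t → x ∉ S → 0 < θ t x)
    (hθzero : ∀ t x, 0 ≤ t → x ∈ C t → x ∈ S → θ t x = 0)
    (hinv : ∀ t₀ x₀, 0 ≤ t₀ → x₀ ∈ C t₀ → ∀ l₀ : ℝ, θ t₀ x₀ ≤ ENNReal.ofReal l₀ →
      ∃ τ > (0 : ℝ), ∃ x : ℝ → EuclideanSpace ℝ (Fin n),
        IsSweepingSol C G t₀ (t₀ + τ) x ∧ x t₀ = x₀ ∧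
        ∀ s ∈ Ico (0 : ℝ) τ, θ (t₀ + s) (x (t₀ + s)) ≤ ENNReal.ofReal (l₀ - s)) :
    ∀ t x, 0 ≤ t → x ∈ C t → minTime C G S t x ≤ θ t x := by
  intro t x ht hx
  by_cases htop : θ t x = ⊤
  · rw [htop]; exact le_top
  set l₀ : ℝ := (θ t x).toReal with hl₀def
  have hl₀0 : 0 ≤ l₀ := ENNReal.toReal_nonneg
  have hθle : θ t x ≤ ENNReal.ofReal l₀ := by
    rw [hl₀def, ENNReal.ofReal_toReal htop]
  have hM : 0 ≤ M := by
    obtain ⟨v, hv⟩ := hG.nonempty 0 0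
    exact (norm_nonneg v).trans (hG.bounded 0 0 v hv)
  have hL : 0 ≤ L_C := by
    have h1 := hC.lipschitz 0 1 le_rfl zero_le_one
    have h2 : (0:ℝ) ≤ hausdorffDist (C 0) (C 1) := hausdorffDist_nonneg
    have h3 : |(0:ℝ) - 1| = 1 := by norm_num
    rw [h3] at h1
    linarith
  classical
  have hP0 : GoodP C G θ t x l₀ ((0:ℝ), fun _ => x) := by
    refine ⟨le_rfl, hl₀0, by rw [add_zero]; exact aux_trivial hx, rfl, ?_⟩
    intro s hs
    have hs0 : s = 0 := le_antisymm hs.2 hs.1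
    rw [hs0, add_zero, sub_zero]
    exact hθle
  have hbdd : ∀ cc : Set {p : ℝ × (ℝ → EuclideanSpace ℝ (Fin n)) // GoodP C G θ t x l₀ p},
      IsChain (fun p q => RP t p.1 q.1) cc →
      ∃ ub : {p : ℝ × (ℝ → EuclideanSpace ℝ (Fin n)) // GoodP C G θ t x l₀ p},
        ∀ a ∈ cc, RP t a.1 ub.1 := by
    intro cc hcc
    rcases cc.eq_empty_or_nonempty with rfl | hne
    · exact ⟨⟨((0:ℝ), fun _ => x), hP0⟩, fun a ha => absurd ha (notMem_empty a)⟩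
    · have h1 : ∀ p ∈ Subtype.val '' cc, GoodP C G θ t x l₀ p := by
        rintro p ⟨a, _, rfl⟩
        exact a.2
      have h2 : IsChain (RP t) (Subtype.val '' cc) := by
        rintro p ⟨a, ha, rfl⟩ q ⟨b, hb, rfl⟩ hne'
        exact hcc ha hb (fun h => hne' (by rw [h]))
      obtain ⟨ub, hubG, hub⟩ := aux_chain_ub hr hL hM hC hG hθlsc ht h1 h2 (hne.image _)
      exact ⟨⟨ub, hubG⟩, fun a ha => hub a.1 ⟨a, ha, rfl⟩⟩
  obtain ⟨⟨⟨am, xm⟩, hmG⟩, hm⟩ :=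
    exists_maximal_of_chains_bounded hbdd (fun hab hbc => RP_trans hab hbc)
  have ham0 : 0 ≤ am := hmG.1
  have hmθ : θ (t + am) (xm (t + am)) ≤ ENNReal.ofReal (l₀ - am) :=
    hmG.2.2.2.2 am ⟨ham0, le_rfl⟩
  have ham : am = l₀ := by
    by_contra hamne
    have hamlt : am < l₀ := lt_of_le_of_ne hmG.2.1 hamne
    have hxmC : xm (t + am) ∈ C (t + am) := hmG.2.2.1.1 _ ⟨by linarith, le_rfl⟩
    have ht1 : (0:ℝ) ≤ t + am := by linarith
    obtain ⟨τ, hτ, y, hysol, hyt, hyθ⟩ := hinv (t + am) (xm (t + am)) ht1 hxmC (l₀ - am) hmθ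
    set δ := min (τ/2) (l₀ - am) with hδdef
    have hδ0 : 0 < δ := lt_min (by linarith) (by linarith)
    have hδτ : δ < τ := lt_of_le_of_lt (min_le_left _ _) (by linarith)
    have hδl : δ ≤ l₀ - am := min_le_right _ _
    have hyres : IsSweepingSol C G (t + am) ((t + am) + δ) y :=
      aux_restrict hysol ⟨by linarith, by linarith⟩
    have hglue := aux_glue (show t ≤ t + am by linarith)
      (show t + am ≤ (t + am) + δ by linarith) hmG.2.2.1 hyres hyt
    set zf : ℝ → EuclideanSpace ℝ (Fin n) := fun u => if u ≤ t + am then xm u else y u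
      with hzf
    have hGood2 : GoodP C G θ t x l₀ (am + δ, zf) := by
      refine ⟨show (0:ℝ) ≤ am + δ by linarith, show am + δ ≤ l₀ by linarith, ?_, ?_, ?_⟩
      · have he : t + (am + δ) = (t + am) + δ := by ring
        show IsSweepingSol C G t (t + (am + δ)) zf
        rw [he]
        exact hglue
      · show (if t ≤ t + am then xm t else y t) = x
        rw [if_pos (by linarith : t ≤ t + am)]
        exact hmG.2.2.2.1
      · intro s hs
        have hs1 : (0:ℝ) ≤ s := hs.1
        have hs2 : s ≤ am + δ := hs.2
        rcases le_or_gt s am with h | h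
        · show θ (t + s) (if t + s ≤ t + am then xm (t + s) else y (t + s)) ≤ _
          rw [if_pos (by linarith : t + s ≤ t + am)]
          exact hmG.2.2.2.2 s ⟨hs1, h⟩
        · show θ (t + s) (if t + s ≤ t + am then xm (t + s) else y (t + s)) ≤ _
          rw [if_neg (by push_neg; linarith : ¬ t + s ≤ t + am)]
          have h2 := hyθ (s - am) ⟨by linarith, by linarith⟩
          have h3 : (t + am) + (s - am) = t + s := by ring
          have h4 : l₀ - am - (s - am) = l₀ - s := by ring
          rw [h3, h4] at h2
          exact h2
    have hR1 : RP t (am, xm) (am + δ, zf) := by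
      refine ⟨by simp only; linarith, ?_⟩
      intro u hu
      show (if u ≤ t + am then xm u else y u) = xm u
      rw [if_pos hu.2]
    have hR2 := hm ⟨(am + δ, zf), hGood2⟩ hR1
    have hcon : am + δ ≤ am := hR2.1
    linarith
  have hend : θ (t + l₀) (xm (t + l₀)) = 0 := by
    rw [ham] at hmθ
    simpa using hmθ
  have hendC : xm (t + l₀) ∈ C (t + l₀) := by
    rw [← ham]
    exact hmG.2.2.1.1 (t + am) ⟨by linarith, le_rfl⟩
  have hendS : xm (t + l₀) ∈ S := by
    by_contra hnot
    have hp := hθpos (t + l₀) (xm (t + l₀)) (by linarith) hendC hnot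
    rw [hend] at hp
    exact lt_irrefl 0 hp
  have hmem : ENNReal.ofReal l₀ ∈ ENNReal.ofReal ''
      {a : ℝ | 0 ≤ a ∧ ∃ xx : ℝ → EuclideanSpace ℝ (Fin n),
        IsSweepingSol C G t (t + a) xx ∧ xx t = x ∧ xx (t + a) ∈ S} := by
    refine ⟨l₀, ⟨hl₀0, xm, ?_, hmG.2.2.2.1, hendS⟩, rfl⟩
    rw [← ham]
    exact hmG.2.2.1
  calc minTime C G S t x ≤ ENNReal.ofReal l₀ := sInf_le hmem
    _ = θ t x := by rw [hl₀def, ENNReal.ofReal_toReal htop]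
end

section
/- Assume Hypotheses (H_C) and (H_G), let S ⊆ ℝⁿ be closed with S ∩ C(t) ≠ ∅ for some t ≥ 0, and let θ : graph(C) → [0, +∞] be upper semicontinuous with θ(t,x) > 0 whenever x ∈ C(t)∖S and θ(t,x) = 0 whenever x ∈ C(t) ∩ S. Assume the hypograph of θ is strongly invariant for the augmented dynamics Γ(τ,x,λ) = {1} × (−N_{C(τ)}(x) + G(τ,x)) × {−1}, i.e.: for every (t₀,x₀) ∈ graph(C), every real λ₀ ≤ θ(t₀,x₀), every τ > 0 and every solution x of the perturbed sweeping process on [t₀, t₀ + τ] with x(t₀) = x₀, one has θ(t₀ + s, x(t₀ + s)) ≥ λ₀ − s for all s ∈ [0, τ]. Then θ(t,x) ≤ T(t,x) for all (t,x) ∈ graph(C), where T is the minimum time function for the target S. -/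
open scoped Pointwise RealInnerProductSpace ENNReal
open Set Metric MeasureTheory

variable {E : Type*} [NormedAddCommGroup E] [InnerProductSpace ℝ E]

/-- comparison principle (upper bound side). If `θ : graph(C) → [0,∞]` is usc,
positive outside the target, zero on the target, and its hypograph is strongly invariant for
the augmented dynamics, then `θ ≤ T` on the graph of `C`. -/
theorem comparison_hypograph_strongly_invariant {n : ℕ} (r L_C M L_G : ℝ) (hr : 0 < r)
    (C : ℝ → Set (EuclideanSpace ℝ (Fin n)))
    (G : ℝ → EuclideanSpace ℝ (Fin n) → Set (EuclideanSpace ℝ (Fin n)))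
    (hC : HypC r L_C C) (hG : HypG M L_G G)
    (S : Set (EuclideanSpace ℝ (Fin n))) (hS : IsClosed S)
    (hSC : ∃ t, 0 ≤ t ∧ (S ∩ C t).Nonempty)
    (θ : ℝ → EuclideanSpace ℝ (Fin n) → ℝ≥0∞)
    (hθusc : UpperSemicontinuousOn
      (fun q : ℝ × EuclideanSpace ℝ (Fin n) => θ q.1 q.2) (graphSet C))
    (hθpos : ∀ t x, 0 ≤ t → x ∈ C t → x ∉ S → 0 < θ t x)
    (hθzero : ∀ t x, 0 ≤ t → x ∈ C t → x ∈ S → θ t x = 0)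
    (hinv : ∀ t₀ x₀, 0 ≤ t₀ → x₀ ∈ C t₀ → ∀ l₀ : ℝ, ENNReal.ofReal l₀ ≤ θ t₀ x₀ →
      ∀ τ > (0 : ℝ), ∀ x : ℝ → EuclideanSpace ℝ (Fin n),
        IsSweepingSol C G t₀ (t₀ + τ) x → x t₀ = x₀ →
        ∀ s ∈ Icc (0 : ℝ) τ, ENNReal.ofReal (l₀ - s) ≤ θ (t₀ + s) (x (t₀ + s))) :
    ∀ t x, 0 ≤ t → x ∈ C t → θ t x ≤ minTime C G S t x := by
  intro t x0 ht hx0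
  refine le_sInf ?_
  rintro b ⟨a, ⟨ha, y, hsol, hy0, hyS⟩, rfl⟩
  rcases eq_or_lt_of_le ha with h0 | hapos
  · have hx0S : x0 ∈ S := by
      have : y (t + a) = x0 := by rw [← h0, add_zero, hy0]
      exact this ▸ hyS
    rw [hθzero t x0 ht hx0 hx0S]
    exact zero_le
  · by_contra hlt
    push_neg at hlt
    obtain ⟨l, _, hal, hlθ⟩ := ENNReal.lt_iff_exists_real_btwn.mp hlt
    have hal' : a < l := (ENNReal.ofReal_lt_ofReal_iff_of_nonneg ha).mp hal
    have key := hinv t x0 ht hx0 l hlθ.le a hapos y hsol hy0 a ⟨hapos.le, le_refl a⟩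
    have hmem : y (t + a) ∈ C (t + a) := hsol.1 (t + a) ⟨by linarith, le_refl _⟩
    rw [hθzero _ _ (by linarith) hmem hyS] at key
    have h0' : ENNReal.ofReal (l - a) = 0 := le_antisymm key zero_le
    rw [ENNReal.ofReal_eq_zero] at h0'
    linarith
end
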